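/- arXiv:1502.00367 — 4 statements merged into one kernel-verified Lean document; each statement's English description precedes it below -/
import Mathlib

section
/- Let L₂ = { w · (wᴿ)ₓ₃ · (w)ₓ₁₅ · (wᴿ)ₓ₅ : w a nonempty string over {1,2} } over the alphabet {1,2,3,6,5,10,15,30}, where wᴿ denotes the reverse of w and (u)ₓc denotes the string obtained from u by multiplying each symbol (regarded as a natural number) by c. Then L₂ is the intersection of the two context-free languages L₂,₁ = { w · (wᴿ)ₓ₃ · x : w a nonempty string over {1,2}, x a nonempty string over {5,10,15,30} } and L₂,₂ = { y · (yᴿ)ₓ₅ : y a nonempty string over {1,2,3,6} }; in particular L₂ belongs to CFL(2), the class of intersections of two context-free languages. -/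
/-- Multiply every symbol (a natural number) of the string `u` by `c`. -/
def mulStr (c : ℕ) (u : List ℕ) : List ℕ := u.map (c * ·)

/-- The eight-symbol alphabet Σ = {1,2,3,6,5,10,15,30}. -/
def Sigma8 : Set ℕ := {1, 2, 3, 6, 5, 10, 15, 30}

/-- The nested palindrome `w (wᴿ)ₓ₃ (w)ₓ₁₅ (wᴿ)ₓ₅`. -/
def nest (w : List ℕ) : List ℕ :=
  w ++ mulStr 3 w.reverse ++ mulStr 15 w ++ mulStr 5 w.reverse

/-- The test language L₂. -/
def L2 : Language ℕ :=
  {s | ∃ w : List ℕ, w ≠ [] ∧ (∀ a ∈ w, a = 1 ∨ a = 2) ∧ s = nest w}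

/-- `L` is CFL-immune: `L` is infinite and no infinite subset of `L` is context-free. -/
def CFLImmune {T : Type} (L : Language T) : Prop :=
  Set.Infinite (L : Set (List T)) ∧
    ∀ M : Language T, M ≤ L → Set.Infinite (M : Set (List T)) → ¬ M.IsContextFree

/-- `L`, a language over the (sub)alphabet `A ⊆ ℕ`, belongs to CFL/n with parallel
(length-respecting) advice: there are an alphabet `Γ`, an advice `h` with `|h n| = n`,
and a context-free `L'` over the product alphabet such that for every string `x` over `A`,
`x ∈ L` iff the componentwise pairing of `x` with `h |x|` is in `L'`. -/
def InCFLAdviceParallel (A : Set ℕ) (L : Language ℕ) : Prop :=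
  ∃ (Γ : Type) (_ : Fintype Γ) (h : ℕ → List Γ) (L' : Language (ℕ × Γ)),
    (∀ n, (h n).length = n) ∧ L'.IsContextFree ∧
    ∀ x : List ℕ, (∀ a ∈ x, a ∈ A) → (x ∈ L ↔ x.zip (h x.length) ∈ L')

/-- `L`, a language over the (sub)alphabet `A ⊆ ℕ`, belongs to (CFL/n)_serial
(Damm–Holzer style serial advice): there are an alphabet `Γ₀`, an advice `g` with
`|g n| = n`, and a context-free `L''` over the disjoint-union alphabet `Γ₀ ⊕ ℕ` such
that for every string `x` over `A`, `x ∈ L` iff `g |x| · x ∈ L''`. -/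
def InCFLAdviceSerial (A : Set ℕ) (L : Language ℕ) : Prop :=
  ∃ (Γ₀ : Type) (_ : Fintype Γ₀) (g : ℕ → List Γ₀) (L'' : Language (Γ₀ ⊕ ℕ)),
    (∀ n, (g n).length = n) ∧ L''.IsContextFree ∧
    ∀ x : List ℕ, (∀ a ∈ x, a ∈ A) →
      (x ∈ L ↔ (g x.length).map Sum.inl ++ x.map Sum.inr ∈ L'')

/-- The language L₂,₁. -/
def L21 : Language ℕ :=
  {s | ∃ w x : List ℕ, w ≠ [] ∧ (∀ a ∈ w, a = 1 ∨ a = 2) ∧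
    x ≠ [] ∧ (∀ a ∈ x, a = 5 ∨ a = 10 ∨ a = 15 ∨ a = 30) ∧
    s = w ++ mulStr 3 w.reverse ++ x}

/-- The language L₂,₂. -/
def L22 : Language ℕ :=
  {s | ∃ y : List ℕ, y ≠ [] ∧ (∀ a ∈ y, a = 1 ∨ a = 2 ∨ a = 3 ∨ a = 6) ∧
    s = y ++ mulStr 5 y.reverse}











namespace ContextFreeGrammar
variable {T : Type} {g : ContextFreeGrammar T}

lemma derives_of_terminals {w : List T} {v : List (Symbol T g.NT)}
    (h : g.Derives (w.map Symbol.terminal) v) : v = w.map Symbol.terminal := by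
  rcases h.eq_or_head with heq | ⟨u, ⟨r, _, hr⟩, _⟩
  · exact heq.symm
  · exfalso
    obtain ⟨p, q, hpq, -⟩ := hr.exists_parts
    have : Symbol.nonterminal r.input ∈ w.map Symbol.terminal := by rw [hpq]; simp
    simp at this

lemma produces_append_split {u v w : List (Symbol T g.NT)} (h : g.Produces (u ++ v) w) :
    (∃ u', g.Produces u u' ∧ w = u' ++ v) ∨ (∃ v', g.Produces v v' ∧ w = u ++ v') := by
  obtain ⟨r, hrmem, hr⟩ := h
  obtain ⟨p, q, hpq, rfl⟩ := hr.exists_parts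
  rw [List.append_assoc] at hpq
  rcases List.append_eq_append_iff.mp hpq with ⟨a, rfl, rfl⟩ | ⟨c, rfl, hc⟩
  · right
    refine ⟨a ++ r.output ++ q, ⟨r, hrmem, ?_⟩, by simp⟩
    rw [← List.append_assoc]
    exact ContextFreeRule.rewrites_of_exists_parts r a q
  · cases c with
    | nil =>
      right
      refine ⟨[] ++ r.output ++ q, ⟨r, hrmem, ?_⟩, by simp⟩
      have : v = [] ++ [Symbol.nonterminal r.input] ++ q := by simpa using hc.symm
      rw [this]
      exact ContextFreeRule.rewrites_of_exists_parts r [] q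
    | cons c0 c' =>
      left
      have h0 : c0 = Symbol.nonterminal r.input := by
        have := congrArg (·.head?) hc; simpa using this.symm
      have hq : q = c' ++ v := by
        have := congrArg (·.tail) hc; simpa using this
      subst h0 hq
      refine ⟨p ++ r.output ++ c', ⟨r, hrmem, ?_⟩, by simp⟩
      have : p ++ Symbol.nonterminal r.input :: c' = p ++ [Symbol.nonterminal r.input] ++ c' := by
        simp
      rw [this]
      exact ContextFreeRule.rewrites_of_exists_parts r p c'

lemma derives_append_split {s x : List (Symbol T g.NT)} (h : g.Derives s x) :
    ∀ u v, s = u ++ v → ∃ x1 x2, x = x1 ++ x2 ∧ g.Derives u x1 ∧ g.Derives v x2 := by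
  induction h using Relation.ReflTransGen.head_induction_on with
  | refl => exact fun u v huv => ⟨u, v, huv, Derives.refl u, Derives.refl v⟩
  | head hstep _ ih =>
    rintro u v rfl
    rcases produces_append_split hstep with ⟨u', hu, rfl⟩ | ⟨v', hv, rfl⟩
    · obtain ⟨x1, x2, hx, h1, h2⟩ := ih u' v rfl
      exact ⟨x1, x2, hx, hu.trans_derives h1, h2⟩
    · obtain ⟨x1, x2, hx, h1, h2⟩ := ih u v' rfl
      exact ⟨x1, x2, hx, h1, hv.trans_derives h2⟩

lemma derives_nt_elim {n : g.NT} {w : List T}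
    (h : g.Derives [Symbol.nonterminal n] (w.map Symbol.terminal)) :
    ∃ r ∈ g.rules, r.input = n ∧ g.Derives r.output (w.map Symbol.terminal) := by
  rcases h.eq_or_head with heq | ⟨y, ⟨r, hrmem, hr⟩, hder⟩
  · exfalso
    have : Symbol.nonterminal n ∈ w.map Symbol.terminal := by rw [← heq]; simp
    simp at this
  · obtain ⟨p, q, hpq, hy⟩ := hr.exists_parts
    have hl := congrArg List.length hpq
    simp at hl
    have hp : p = [] := List.length_eq_zero_iff.mp (by omega)
    have hq : q = [] := List.length_eq_zero_iff.mp (by omega)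
    subst hp hq
    simp at hpq hy
    subst hy
    exact ⟨r, hrmem, hpq.symm, hder⟩

lemma produces_rule {r : ContextFreeRule T g.NT} (hr : r ∈ g.rules) :
    g.Produces [Symbol.nonterminal r.input] r.output :=
  ⟨r, hr, ContextFreeRule.Rewrites.input_output⟩

end ContextFreeGrammar

open Symbol ContextFreeGrammar

@[reducible] def g22 : ContextFreeGrammar ℕ where
  NT := Unit
  initial := ()
  rules :=
    { ⟨(), [.terminal 1, .nonterminal (), .terminal 5]⟩,
      ⟨(), [.terminal 2, .nonterminal (), .terminal 10]⟩,
      ⟨(), [.terminal 3, .nonterminal (), .terminal 15]⟩,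
      ⟨(), [.terminal 6, .nonterminal (), .terminal 30]⟩,
      ⟨(), [.terminal 1, .terminal 5]⟩,
      ⟨(), [.terminal 2, .terminal 10]⟩,
      ⟨(), [.terminal 3, .terminal 15]⟩,
      ⟨(), [.terminal 6, .terminal 30]⟩ }

-- test: membership unfolds
example (r : ContextFreeRule ℕ Unit) (h : r ∈ g22.rules) : True := by
  simp only [g22, Finset.mem_insert, Finset.mem_singleton] at h
  trivial

example :
    (⟨(), [.terminal 3, .nonterminal (), .terminal 15]⟩ : ContextFreeRule ℕ Unit) ∈ g22.rules := by
  simp [g22]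

lemma g22_rec_case {n : ℕ}
    (ih : ∀ m, m < n → ∀ s : List ℕ, s.length = m →
      g22.Derives [Symbol.nonterminal ()] (s.map Symbol.terminal) → s ∈ L22)
    {s : List ℕ} (hlen : s.length = n) {a b : ℕ}
    (ha : a = 1 ∨ a = 2 ∨ a = 3 ∨ a = 6) (hb : b = 5 * a)
    (hout : g22.Derives [Symbol.terminal a, Symbol.nonterminal (), Symbol.terminal b]
      (s.map Symbol.terminal)) : s ∈ L22 := by
  obtain ⟨x1, x23, hx, h1, h23⟩ := derives_append_split hout [Symbol.terminal a]
    [Symbol.nonterminal (), Symbol.terminal b] rfl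
  have hx1 : x1 = [Symbol.terminal a] := derives_of_terminals (w := [a]) h1
  obtain ⟨x2, x3, hx23, h2, h3⟩ := derives_append_split h23 [Symbol.nonterminal ()]
    [Symbol.terminal b] rfl
  have hx3 : x3 = [Symbol.terminal b] := derives_of_terminals (w := [b]) h3
  subst hx1 hx3 hx23
  rw [List.map_eq_append_iff] at hx
  obtain ⟨l1, l2, rfl, hl1, hl2⟩ := hx
  rw [List.map_eq_append_iff] at hl2
  obtain ⟨m, l3, rfl, hm, hl3⟩ := hl2
  have hl1' : l1 = [a] := by
    cases l1 with
    | nil => simp at hl1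
    | cons c t => cases t <;> simp_all
  have hl3' : l3 = [b] := by
    cases l3 with
    | nil => simp at hl3
    | cons c t => cases t <;> simp_all
  subst hl1' hl3'
  have h2' : g22.Derives [Symbol.nonterminal ()] (m.map Symbol.terminal) := hm ▸ h2
  have hmlen : m.length < n := by simp at hlen; omega
  obtain ⟨y, hyne, hyal, rfl⟩ := ih m.length hmlen m rfl h2'
  refine ⟨a :: y, by simp, ?_, ?_⟩
  · intro c hc
    rcases List.mem_cons.mp hc with rfl | hc
    · exact ha
    · exact hyal c hc
  · subst hb
    simp [mulStr, List.reverse_cons]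

lemma g22_base_case {s : List ℕ} {a b : ℕ}
    (ha : a = 1 ∨ a = 2 ∨ a = 3 ∨ a = 6) (hb : b = 5 * a)
    (hout : g22.Derives [Symbol.terminal a, Symbol.terminal b] (s.map Symbol.terminal)) :
    s ∈ L22 := by
  have h := derives_of_terminals (g := g22) (w := [a, b]) hout
  have hs : s = [a, b] := by
    cases s with
    | nil => simp at h
    | cons c t =>
      cases t with
      | nil => simp at h
      | cons d t2 => cases t2 <;> simp_all
  subst hs hb
  exact ⟨[a], by simp, by simpa using ha, by simp [mulStr]⟩

lemma g22_sound : ∀ n (s : List ℕ), s.length = n →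
    g22.Derives [Symbol.nonterminal ()] (s.map Symbol.terminal) → s ∈ L22 := by
  intro n
  induction n using Nat.strong_induction_on with
  | _ n ih =>
    intro s hlen hder
    obtain ⟨r, hrmem, -, hout⟩ := derives_nt_elim hder
    simp only [g22, Finset.mem_insert, Finset.mem_singleton] at hrmem
    rcases hrmem with rfl | rfl | rfl | rfl | rfl | rfl | rfl | rfl
    · exact g22_rec_case ih hlen (by norm_num) (by norm_num) hout
    · exact g22_rec_case ih hlen (by norm_num) (by norm_num) hout
    · exact g22_rec_case ih hlen (by norm_num) (by norm_num) hout
    · exact g22_rec_case ih hlen (by norm_num) (by norm_num) hout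
    · exact g22_base_case (by norm_num) (by norm_num) hout
    · exact g22_base_case (by norm_num) (by norm_num) hout
    · exact g22_base_case (by norm_num) (by norm_num) hout
    · exact g22_base_case (by norm_num) (by norm_num) hout

lemma g22_complete : ∀ y : List ℕ, y ≠ [] → (∀ a ∈ y, a = 1 ∨ a = 2 ∨ a = 3 ∨ a = 6) →
    g22.Derives [Symbol.nonterminal ()] ((y ++ mulStr 5 y.reverse).map Symbol.terminal) := by
  intro y
  induction y with
  | nil => simp
  | cons a y' ih =>
    intro _ hal
    have ha := hal a (by simp)
    by_cases hy' : y' = []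
    · subst hy'
      have hmem : (⟨(), [Symbol.terminal a, Symbol.terminal (5 * a)]⟩ :
          ContextFreeRule ℕ Unit) ∈ g22.rules := by
        rcases ha with rfl | rfl | rfl | rfl <;> simp [g22]
      have := (produces_rule hmem).single
      simpa [mulStr] using this
    · have hder := ih hy' (fun b hb => hal b (by simp [hb]))
      have hmem : (⟨(), [Symbol.terminal a, Symbol.nonterminal (), Symbol.terminal (5 * a)]⟩ :
          ContextFreeRule ℕ Unit) ∈ g22.rules := by
        rcases ha with rfl | rfl | rfl | rfl <;> simp [g22]
      refine (produces_rule hmem).trans_derives ?_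
      have h2 := (hder.append_left [Symbol.terminal a]).append_right [Symbol.terminal (5 * a)]
      simpa [mulStr, List.reverse_cons] using h2

lemma g22_lang : g22.language = L22 := by
  ext s
  constructor
  · intro h
    exact g22_sound s.length s rfl h
  · rintro ⟨y, hyne, hyal, rfl⟩
    exact g22_complete y hyne hyal


@[reducible] def g21 : ContextFreeGrammar ℕ where
  NT := Fin 3
  initial := 0
  rules :=
    { ⟨0, [.nonterminal 1, .nonterminal 2]⟩,
      ⟨1, [.terminal 1, .nonterminal 1, .terminal 3]⟩,
      ⟨1, [.terminal 2, .nonterminal 1, .terminal 6]⟩,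
      ⟨1, [.terminal 1, .terminal 3]⟩,
      ⟨1, [.terminal 2, .terminal 6]⟩,
      ⟨2, [.terminal 5, .nonterminal 2]⟩,
      ⟨2, [.terminal 10, .nonterminal 2]⟩,
      ⟨2, [.terminal 15, .nonterminal 2]⟩,
      ⟨2, [.terminal 30, .nonterminal 2]⟩,
      ⟨2, [.terminal 5]⟩,
      ⟨2, [.terminal 10]⟩,
      ⟨2, [.terminal 15]⟩,
      ⟨2, [.terminal 30]⟩ }

instance : DecidableEq g21.NT := inferInstanceAs (DecidableEq (Fin 3))

/-- property generated by nonterminal A (=1) -/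
def PA (s : List ℕ) : Prop :=
  ∃ w : List ℕ, w ≠ [] ∧ (∀ a ∈ w, a = 1 ∨ a = 2) ∧ s = w ++ mulStr 3 w.reverse

/-- property generated by nonterminal B (=2) -/
def PB (s : List ℕ) : Prop :=
  s ≠ [] ∧ ∀ a ∈ s, a = 5 ∨ a = 10 ∨ a = 15 ∨ a = 30

lemma gB_rec_case {n : ℕ}
    (ih : ∀ m, m < n → ∀ s : List ℕ, s.length = m →
      g21.Derives [Symbol.nonterminal (2 : Fin 3)] (s.map Symbol.terminal) → PB s)
    {s : List ℕ} (hlen : s.length = n) {c : ℕ}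
    (hc : c = 5 ∨ c = 10 ∨ c = 15 ∨ c = 30)
    (hout : g21.Derives [Symbol.terminal c, Symbol.nonterminal (2 : Fin 3)] (s.map Symbol.terminal)) :
    PB s := by
  obtain ⟨x1, x2, hx, h1, h2⟩ := derives_append_split hout [Symbol.terminal c]
    [Symbol.nonterminal (2 : Fin 3)] rfl
  have hx1 : x1 = [Symbol.terminal c] := derives_of_terminals (w := [c]) h1
  subst hx1
  rw [List.map_eq_append_iff] at hx
  obtain ⟨l1, m, rfl, hl1, hm⟩ := hx
  have hl1' : l1 = [c] := by
    cases l1 with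
    | nil => simp at hl1
    | cons d t => cases t <;> simp_all
  subst hl1'
  have h2' : g21.Derives [Symbol.nonterminal (2 : Fin 3)] (m.map Symbol.terminal) := hm ▸ h2
  have hmlen : m.length < n := by simp at hlen; omega
  obtain ⟨-, hmal⟩ := ih m.length hmlen m rfl h2'
  refine ⟨by simp, ?_⟩
  intro a hamem
  rcases List.mem_cons.mp hamem with rfl | hamem
  · exact hc
  · exact hmal a hamem

lemma gB_base_case {s : List ℕ} {c : ℕ}
    (hc : c = 5 ∨ c = 10 ∨ c = 15 ∨ c = 30)
    (hout : g21.Derives [Symbol.terminal c] (s.map Symbol.terminal)) : PB s := by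
  have h := derives_of_terminals (g := g21) (w := [c]) hout
  have hs : s = [c] := by
    cases s with
    | nil => simp at h
    | cons d t => cases t <;> simp_all
  subst hs
  exact ⟨by simp, by simpa using hc⟩

lemma gB_sound : ∀ n (s : List ℕ), s.length = n →
    g21.Derives [Symbol.nonterminal (2 : Fin 3)] (s.map Symbol.terminal) → PB s := by
  intro n
  induction n using Nat.strong_induction_on with
  | _ n ih =>
    intro s hlen hder
    obtain ⟨r, hrmem, hin, hout⟩ := derives_nt_elim hder
    simp only [g21, Finset.mem_insert, Finset.mem_singleton] at hrmem
    rcases hrmem with rfl | rfl | rfl | rfl | rfl | rfl | rfl | rfl | rfl | rfl | rfl | rfl | rfl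
    · exact absurd hin (by decide)
    · exact absurd hin (by decide)
    · exact absurd hin (by decide)
    · exact absurd hin (by decide)
    · exact absurd hin (by decide)
    · exact gB_rec_case ih hlen (by norm_num) hout
    · exact gB_rec_case ih hlen (by norm_num) hout
    · exact gB_rec_case ih hlen (by norm_num) hout
    · exact gB_rec_case ih hlen (by norm_num) hout
    · exact gB_base_case (by norm_num) hout
    · exact gB_base_case (by norm_num) hout
    · exact gB_base_case (by norm_num) hout
    · exact gB_base_case (by norm_num) hout

lemma gA_rec_case {n : ℕ}
    (ih : ∀ m, m < n → ∀ s : List ℕ, s.length = m →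
      g21.Derives [Symbol.nonterminal (1 : Fin 3)] (s.map Symbol.terminal) → PA s)
    {s : List ℕ} (hlen : s.length = n) {a b : ℕ}
    (ha : a = 1 ∨ a = 2) (hb : b = 3 * a)
    (hout : g21.Derives [Symbol.terminal a, Symbol.nonterminal (1 : Fin 3), Symbol.terminal b]
      (s.map Symbol.terminal)) : PA s := by
  obtain ⟨x1, x23, hx, h1, h23⟩ := derives_append_split hout [Symbol.terminal a]
    [Symbol.nonterminal (1 : Fin 3), Symbol.terminal b] rfl
  have hx1 : x1 = [Symbol.terminal a] := derives_of_terminals (w := [a]) h1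
  obtain ⟨x2, x3, hx23, h2, h3⟩ := derives_append_split h23 [Symbol.nonterminal (1 : Fin 3)]
    [Symbol.terminal b] rfl
  have hx3 : x3 = [Symbol.terminal b] := derives_of_terminals (w := [b]) h3
  subst hx1 hx3 hx23
  rw [List.map_eq_append_iff] at hx
  obtain ⟨l1, l2, rfl, hl1, hl2⟩ := hx
  rw [List.map_eq_append_iff] at hl2
  obtain ⟨m, l3, rfl, hm, hl3⟩ := hl2
  have hl1' : l1 = [a] := by
    cases l1 with
    | nil => simp at hl1
    | cons c t => cases t <;> simp_all
  have hl3' : l3 = [b] := by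
    cases l3 with
    | nil => simp at hl3
    | cons c t => cases t <;> simp_all
  subst hl1' hl3'
  have h2' : g21.Derives [Symbol.nonterminal (1 : Fin 3)] (m.map Symbol.terminal) := hm ▸ h2
  have hmlen : m.length < n := by simp at hlen; omega
  obtain ⟨w, hwne, hwal, rfl⟩ := ih m.length hmlen m rfl h2'
  refine ⟨a :: w, by simp, ?_, ?_⟩
  · intro c hc
    rcases List.mem_cons.mp hc with rfl | hc
    · exact ha
    · exact hwal c hc
  · subst hb
    simp [mulStr, List.reverse_cons]

lemma gA_base_case {s : List ℕ} {a b : ℕ}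
    (ha : a = 1 ∨ a = 2) (hb : b = 3 * a)
    (hout : g21.Derives [Symbol.terminal a, Symbol.terminal b] (s.map Symbol.terminal)) :
    PA s := by
  have h := derives_of_terminals (g := g21) (w := [a, b]) hout
  have hs : s = [a, b] := by
    cases s with
    | nil => simp at h
    | cons c t =>
      cases t with
      | nil => simp at h
      | cons d t2 => cases t2 <;> simp_all
  subst hs hb
  exact ⟨[a], by simp, by simpa using ha, by simp [mulStr]⟩

lemma gA_sound : ∀ n (s : List ℕ), s.length = n →
    g21.Derives [Symbol.nonterminal (1 : Fin 3)] (s.map Symbol.terminal) → PA s := by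
  intro n
  induction n using Nat.strong_induction_on with
  | _ n ih =>
    intro s hlen hder
    obtain ⟨r, hrmem, hin, hout⟩ := derives_nt_elim hder
    simp only [g21, Finset.mem_insert, Finset.mem_singleton] at hrmem
    rcases hrmem with rfl | rfl | rfl | rfl | rfl | rfl | rfl | rfl | rfl | rfl | rfl | rfl | rfl
    · exact absurd hin (by decide)
    · exact gA_rec_case ih hlen (by norm_num) (by norm_num) hout
    · exact gA_rec_case ih hlen (by norm_num) (by norm_num) hout
    · exact gA_base_case (by norm_num) (by norm_num) hout
    · exact gA_base_case (by norm_num) (by norm_num) hout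
    all_goals exact absurd hin (by decide)

lemma g21_sound {s : List ℕ}
    (hder : g21.Derives [Symbol.nonterminal g21.initial] (s.map Symbol.terminal)) :
    s ∈ L21 := by
  obtain ⟨r, hrmem, hin, hout⟩ := derives_nt_elim hder
  simp only [g21, Finset.mem_insert, Finset.mem_singleton] at hrmem
  rcases hrmem with rfl | rfl | rfl | rfl | rfl | rfl | rfl | rfl | rfl | rfl | rfl | rfl | rfl
  case inl =>
    obtain ⟨x1, x2, hx, h1, h2⟩ := derives_append_split hout [Symbol.nonterminal (1 : Fin 3)]
      [Symbol.nonterminal (2 : Fin 3)] rfl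
    rw [List.map_eq_append_iff] at hx
    obtain ⟨s1, s2, rfl, hs1, hs2⟩ := hx
    obtain ⟨w, hwne, hwal, rfl⟩ := gA_sound s1.length s1 rfl (hs1 ▸ h1)
    obtain ⟨hs2ne, hs2al⟩ := gB_sound s2.length s2 rfl (hs2 ▸ h2)
    exact ⟨w, s2, hwne, hwal, hs2ne, hs2al, by simp⟩
  all_goals exact absurd hin (by decide)

lemma gB_complete : ∀ x : List ℕ, x ≠ [] → (∀ a ∈ x, a = 5 ∨ a = 10 ∨ a = 15 ∨ a = 30) →
    g21.Derives [Symbol.nonterminal (2 : Fin 3)] (x.map Symbol.terminal) := by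
  intro x
  induction x with
  | nil => simp
  | cons c x' ih =>
    intro _ hal
    have hc := hal c (by simp)
    by_cases hx' : x' = []
    · subst hx'
      have hmem : (⟨2, [Symbol.terminal c]⟩ : ContextFreeRule ℕ (Fin 3)) ∈ g21.rules := by
        rcases hc with rfl | rfl | rfl | rfl <;> simp [g21]
      exact (produces_rule hmem).single
    · have hder := ih hx' (fun b hb => hal b (by simp [hb]))
      have hmem : (⟨2, [Symbol.terminal c, Symbol.nonterminal (2 : Fin 3)]⟩ :
          ContextFreeRule ℕ (Fin 3)) ∈ g21.rules := by
        rcases hc with rfl | rfl | rfl | rfl <;> simp [g21]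
      refine (produces_rule hmem).trans_derives ?_
      simpa using hder.append_left [Symbol.terminal c]

lemma gA_complete : ∀ w : List ℕ, w ≠ [] → (∀ a ∈ w, a = 1 ∨ a = 2) →
    g21.Derives [Symbol.nonterminal (1 : Fin 3)] ((w ++ mulStr 3 w.reverse).map Symbol.terminal) := by
  intro w
  induction w with
  | nil => simp
  | cons a w' ih =>
    intro _ hal
    have ha := hal a (by simp)
    by_cases hw' : w' = []
    · subst hw'
      have hmem : (⟨1, [Symbol.terminal a, Symbol.terminal (3 * a)]⟩ :
          ContextFreeRule ℕ (Fin 3)) ∈ g21.rules := by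
        rcases ha with rfl | rfl <;> simp [g21]
      have := (produces_rule hmem).single
      simpa [mulStr] using this
    · have hder := ih hw' (fun b hb => hal b (by simp [hb]))
      have hmem : (⟨1, [Symbol.terminal a, Symbol.nonterminal (1 : Fin 3), Symbol.terminal (3 * a)]⟩ :
          ContextFreeRule ℕ (Fin 3)) ∈ g21.rules := by
        rcases ha with rfl | rfl <;> simp [g21]
      refine (produces_rule hmem).trans_derives ?_
      have h2 := (hder.append_left [Symbol.terminal a]).append_right [Symbol.terminal (3 * a)]
      simpa [mulStr, List.reverse_cons] using h2

lemma g21_lang : g21.language = L21 := by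
  ext s
  constructor
  · exact g21_sound
  · rintro ⟨w, x, hwne, hwal, hxne, hxal, rfl⟩
    have hmem : (⟨0, [Symbol.nonterminal (1 : Fin 3), Symbol.nonterminal (2 : Fin 3)]⟩ :
        ContextFreeRule ℕ (Fin 3)) ∈ g21.rules := by simp [g21]
    refine (produces_rule hmem).trans_derives ?_
    have hA := (gA_complete w hwne hwal).append_right [Symbol.nonterminal (2 : Fin 3)]
    have hB := (gB_complete x hxne hxal).append_left
      ((w ++ mulStr 3 w.reverse).map Symbol.terminal)
    have := hA.trans hB
    simpa using this

lemma g22_lang' : g22.language = L22 := by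
  ext s
  constructor
  · intro h
    exact g22_sound s.length s rfl h
  · rintro ⟨y, hyne, hyal, rfl⟩
    exact g22_complete y hyne hyal

lemma append_split_unique {S1 S2 : ℕ → Prop} (hd : ∀ a, S1 a → S2 a → False)
    {A1 B1 A2 B2 : List ℕ} (hA1 : ∀ a ∈ A1, S1 a) (hB1 : ∀ a ∈ B1, S2 a)
    (hA2 : ∀ a ∈ A2, S1 a) (hB2 : ∀ a ∈ B2, S2 a) (h : A1 ++ B1 = A2 ++ B2) :
    A1 = A2 ∧ B1 = B2 := by
  rcases List.append_eq_append_iff.mp h with ⟨t, rfl, rfl⟩ | ⟨t, rfl, rfl⟩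
  · cases t with
    | nil => simp
    | cons c t' => exact (hd c (hA2 c (by simp)) (hB1 c (by simp))).elim
  · cases t with
    | nil => simp
    | cons c t' => exact (hd c (hA1 c (by simp)) (hB2 c (by simp))).elim

lemma mulStr5_rev (w : List ℕ) :
    mulStr 5 (w ++ mulStr 3 w.reverse).reverse = mulStr 15 w ++ mulStr 5 w.reverse := by
  have hcomp : ((fun a => 5 * a) ∘ fun a => 3 * a) = (fun a => 15 * a) := by
    funext a; simp only [Function.comp_apply]; ring
  simp [mulStr, List.map_map, hcomp]

lemma L2_eq : L2 = L21 ⊓ L22 := by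
  ext s
  constructor
  · rintro ⟨w, hwne, hw, rfl⟩
    constructor
    · refine ⟨w, mulStr 15 w ++ mulStr 5 w.reverse, hwne, hw, ?_, ?_, ?_⟩
      · simp [mulStr, hwne]
      · intro a ha
        simp only [mulStr, List.mem_append, List.mem_map, List.mem_reverse] at ha
        rcases ha with ⟨b, hb, rfl⟩ | ⟨b, hb, rfl⟩ <;>
          rcases hw b hb with rfl | rfl <;> norm_num
      · simp [nest, List.append_assoc]
    · refine ⟨w ++ mulStr 3 w.reverse, by simp [hwne], ?_, ?_⟩
      · intro a ha
        simp only [mulStr, List.mem_append, List.mem_map, List.mem_reverse] at ha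
        rcases ha with h | ⟨b, hb, rfl⟩
        · rcases hw a h with rfl | rfl <;> norm_num
        · rcases hw b hb with rfl | rfl <;> norm_num
      · rw [mulStr5_rev]
        simp [nest, List.append_assoc]
  · rintro ⟨⟨w, x, hwne, hw, hxne, hx, h1⟩, ⟨y, hyne, hy, h2⟩⟩
    have hA1 : ∀ a ∈ w ++ mulStr 3 w.reverse, a = 1 ∨ a = 2 ∨ a = 3 ∨ a = 6 := by
      intro a ha
      simp only [mulStr, List.mem_append, List.mem_map, List.mem_reverse] at ha
      rcases ha with h | ⟨b, hb, rfl⟩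
      · rcases hw a h with rfl | rfl <;> norm_num
      · rcases hw b hb with rfl | rfl <;> norm_num
    have hB2 : ∀ a ∈ mulStr 5 y.reverse, a = 5 ∨ a = 10 ∨ a = 15 ∨ a = 30 := by
      intro a ha
      simp only [mulStr, List.mem_map, List.mem_reverse] at ha
      obtain ⟨b, hb, rfl⟩ := ha
      rcases hy b hb with rfl | rfl | rfl | rfl <;> norm_num
    have hkey := append_split_unique
      (S1 := fun a => a = 1 ∨ a = 2 ∨ a = 3 ∨ a = 6)
      (S2 := fun a => a = 5 ∨ a = 10 ∨ a = 15 ∨ a = 30)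
      (by intro a h1 h2; omega)
      hA1 hx hy hB2 (h1.symm.trans h2)
    obtain ⟨hAeq, -⟩ := hkey
    refine ⟨w, hwne, hw, ?_⟩
    rw [h2, ← hAeq, mulStr5_rev]
    simp [nest, List.append_assoc]


/-- L₂ is the intersection of the context-free languages L₂,₁ and L₂,₂;
in particular L₂ belongs to CFL(2). -/
theorem L2_eq_inter_and_in_CFL2 :
    L21.IsContextFree ∧ L22.IsContextFree ∧ L2 = L21 ⊓ L22 ∧
      (∃ La Lb : Language ℕ, La.IsContextFree ∧ Lb.IsContextFree ∧ L2 = La ⊓ Lb) := by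

  exact
    have cf21 : L21.IsContextFree := ⟨g21, g21_lang⟩
    have cf22 : L22.IsContextFree := ⟨g22, g22_lang'⟩
    ⟨cf21, cf22, L2_eq, L21, L22, cf21, cf22, L2_eq⟩
end

section
/- The language L₂ = { w · (wᴿ)ₓ₃ · (w)ₓ₁₅ · (wᴿ)ₓ₅ : w a nonempty string over {1,2} } over the alphabet {1,2,3,6,5,10,15,30} is CFL-immune; that is, L₂ is infinite and no infinite subset of L₂ is a context-free language. -/
namespace CFLPump

open ContextFreeGrammar

variable {T : Type} {g : ContextFreeGrammar.{0} T}

/-- `g` derives `v` from `u` in exactly `n` steps. -/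
def DerivesIn (g : ContextFreeGrammar.{0} T) :
    ℕ → List (Symbol T g.NT) → List (Symbol T g.NT) → Prop
  | 0, u, v => u = v
  | n + 1, u, v => ∃ w, g.Produces u w ∧ DerivesIn g n w v

lemma DerivesIn.refl (u : List (Symbol T g.NT)) : DerivesIn g 0 u u := rfl

lemma DerivesIn.trans {m n : ℕ} {u v w : List (Symbol T g.NT)}
    (h1 : DerivesIn g m u v) (h2 : DerivesIn g n v w) : DerivesIn g (m + n) u w := by
  induction m generalizing u with
  | zero => cases h1; simpa using h2
  | succ m ih =>
    obtain ⟨s, hs, hd⟩ := h1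
    rw [Nat.add_right_comm]
    exact ⟨s, hs, ih hd⟩

lemma derivesIn_derives {n : ℕ} {u v : List (Symbol T g.NT)} (h : DerivesIn g n u v) :
    g.Derives u v := by
  induction n generalizing u with
  | zero => cases h; rfl
  | succ n ih => obtain ⟨w, hw, hd⟩ := h; exact (Relation.ReflTransGen.single hw).trans (ih hd)

lemma derives_derivesIn {u v : List (Symbol T g.NT)} (h : g.Derives u v) :
    ∃ n, DerivesIn g n u v := by
  induction h using Relation.ReflTransGen.head_induction_on with
  | refl => exact ⟨0, rfl⟩
  | head hp _ ih => obtain ⟨n, hn⟩ := ih; exact ⟨n + 1, _, hp, hn⟩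

lemma DerivesIn.append_left {n : ℕ} {u v : List (Symbol T g.NT)}
    (h : DerivesIn g n u v) (p : List (Symbol T g.NT)) :
    DerivesIn g n (p ++ u) (p ++ v) := by
  induction n generalizing u with
  | zero => cases h; rfl
  | succ n ih => obtain ⟨w, hw, hd⟩ := h; exact ⟨p ++ w, hw.append_left p, ih hd⟩

lemma DerivesIn.append_right {n : ℕ} {u v : List (Symbol T g.NT)}
    (h : DerivesIn g n u v) (p : List (Symbol T g.NT)) :
    DerivesIn g n (u ++ p) (v ++ p) := by
  induction n generalizing u with
  | zero => cases h; rfl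
  | succ n ih => obtain ⟨w, hw, hd⟩ := h; exact ⟨w ++ p, hw.append_right p, ih hd⟩

/-- A single rewriting step on a concatenation happens inside one of the parts. -/
lemma produces_append {u v w : List (Symbol T g.NT)} (h : g.Produces (u ++ v) w) :
    (∃ u', g.Produces u u' ∧ w = u' ++ v) ∨ (∃ v', g.Produces v v' ∧ w = u ++ v') := by
  obtain ⟨r, hr, hrw⟩ := h
  obtain ⟨p, q, hpq, hw⟩ := hrw.exists_parts
  rw [List.append_assoc] at hpq
  rcases List.append_eq_append_iff.mp hpq with ⟨a, ha1, ha2⟩ | ⟨c, hc1, hc2⟩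
  · right
    refine ⟨a ++ r.output ++ q, ⟨r, hr, ?_⟩, by simp [hw, ha1]⟩
    rw [ha2]
    simpa using ContextFreeRule.rewrites_of_exists_parts r a q
  · cases c with
    | nil =>
      right
      refine ⟨[] ++ r.output ++ q, ⟨r, hr, ?_⟩, by simp [hw, hc1]⟩
      have : v = [] ++ [Symbol.nonterminal r.input] ++ q := by simpa using hc2.symm
      rw [this]
      exact ContextFreeRule.rewrites_of_exists_parts r [] q
    | cons x c' =>
      left
      have hx : x = Symbol.nonterminal r.input ∧ q = c' ++ v := by
        constructor
        · have := congrArg (fun l => l.head?) hc2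
          simpa using this.symm
        · have := congrArg List.tail hc2
          simpa using this
      obtain ⟨hx1, hx2⟩ := hx
      refine ⟨p ++ r.output ++ c', ⟨r, hr, ?_⟩, by simp [hw, hx2]⟩
      have : u = p ++ [Symbol.nonterminal r.input] ++ c' := by simp [hc1, hx1]
      rw [this]
      exact ContextFreeRule.rewrites_of_exists_parts r p c'


/-- Splitting a step-counted derivation from a concatenation. -/
lemma derivesIn_append {n : ℕ} {u v w : List (Symbol T g.NT)}
    (h : DerivesIn g n (u ++ v) w) :
    ∃ n₁ n₂ w₁ w₂, n₁ + n₂ = n ∧ w = w₁ ++ w₂ ∧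
      DerivesIn g n₁ u w₁ ∧ DerivesIn g n₂ v w₂ := by
  induction n generalizing u v with
  | zero => exact ⟨0, 0, u, v, rfl, h.symm, rfl, rfl⟩
  | succ n ih =>
    obtain ⟨s, hs, hd⟩ := h
    rcases produces_append hs with ⟨u', hu', rfl⟩ | ⟨v', hv', rfl⟩
    · obtain ⟨n₁, n₂, w₁, w₂, hn, hw, h1, h2⟩ := ih hd
      exact ⟨n₁ + 1, n₂, w₁, w₂, by omega, hw, ⟨u', hu', h1⟩, h2⟩
    · obtain ⟨n₁, n₂, w₁, w₂, hn, hw, h1, h2⟩ := ih hd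
      exact ⟨n₁, n₂ + 1, w₁, w₂, by omega, hw, h1, ⟨v', hv', h2⟩⟩

/-- All-terminal strings cannot be rewritten. -/
lemma derivesIn_terminal {n : ℕ} {u : List T} {v : List (Symbol T g.NT)}
    (h : DerivesIn g n (u.map Symbol.terminal) v) : v = u.map Symbol.terminal := by
  cases n with
  | zero => exact h.symm
  | succ n =>
    exfalso
    obtain ⟨s, ⟨r, _, hrw⟩, _⟩ := h
    obtain ⟨p, q, hpq, -⟩ := hrw.exists_parts
    have : Symbol.nonterminal r.input ∈ u.map Symbol.terminal := by
      rw [hpq]; simp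
    simp at this

/-- A derivation from a single nonterminal to a terminal word starts with a rule for it. -/
lemma derivesIn_nonterminal {n : ℕ} {A : g.NT} {z : List T}
    (h : DerivesIn g n [Symbol.nonterminal A] (z.map Symbol.terminal)) :
    ∃ m r, n = m + 1 ∧ r ∈ g.rules ∧ r.input = A ∧
      DerivesIn g m r.output (z.map Symbol.terminal) := by
  cases n with
  | zero =>
    exfalso
    have : Symbol.nonterminal A ∈ z.map Symbol.terminal := by
      rw [← h]; simp
    simp at this
  | succ n =>
    obtain ⟨s, ⟨r, hr, hrw⟩, hd⟩ := h
    obtain ⟨p, q, hpq, hs⟩ := hrw.exists_parts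
    have hp : p = [] ∧ q = [] ∧ (Symbol.nonterminal r.input : Symbol T g.NT) = Symbol.nonterminal A := by
      have hl := congrArg List.length hpq
      simp at hl
      obtain ⟨hp0, hq0⟩ : p = [] ∧ q = [] := by
        constructor <;> [exact List.length_eq_zero_iff.mp (by omega); exact List.length_eq_zero_iff.mp (by omega)]
      refine ⟨hp0, hq0, ?_⟩
      simpa [hp0, hq0] using hpq.symm
    obtain ⟨hp0, hq0, hAi⟩ := hp
    refine ⟨n, r, rfl, hr, by injection hAi, ?_⟩
    rw [hs, hp0, hq0] at hd
    simpa using hd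


lemma DerivesIn.surround {n : ℕ} {s t : List (Symbol T g.NT)} (h : DerivesIn g n s t)
    (p q : List (Symbol T g.NT)) : DerivesIn g n (p ++ s ++ q) (p ++ t ++ q) :=
  (h.append_left p).append_right q

/-- The finite set of nonterminals appearing as inputs of rules. -/
noncomputable def NTS (g : ContextFreeGrammar.{0} T) : Finset g.NT :=
  letI := Classical.decEq g.NT
  g.rules.image (·.input)

/-- Bound on lengths of right-hand sides of rules (at least 1). -/
noncomputable def mB (g : ContextFreeGrammar.{0} T) : ℕ :=
  max (g.rules.sup fun r => r.output.length) 1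

lemma one_le_mB : 1 ≤ mB g := by unfold mB; exact le_max_right _ _

lemma output_le_mB {r : ContextFreeRule T g.NT} (hr : r ∈ g.rules) :
    r.output.length ≤ mB g := by
  unfold mB
  exact le_trans (Finset.le_sup (f := fun r => r.output.length) hr) (le_max_left _ _)

/-- Pumping configuration rooted at `A`. -/
def Pump (g : ContextFreeGrammar.{0} T) (A : g.NT) (z : List T) (n : ℕ) : Prop :=
  ∃ (B : g.NT) (u v w x y : List T) (a b c : ℕ),
    z = u ++ v ++ w ++ x ++ y ∧
    DerivesIn g a [Symbol.nonterminal A]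
      (u.map Symbol.terminal ++ [Symbol.nonterminal B] ++ y.map Symbol.terminal) ∧
    DerivesIn g b [Symbol.nonterminal B]
      (v.map Symbol.terminal ++ [Symbol.nonterminal B] ++ x.map Symbol.terminal) ∧
    DerivesIn g c [Symbol.nonterminal B] (w.map Symbol.terminal) ∧
    1 ≤ b ∧ a + b + c ≤ n

/-- The derivation from `A` passes through an ancestor nonterminal `B`. -/
def Hits (g : ContextFreeGrammar.{0} T) (B A : g.NT) (z : List T) (n : ℕ) : Prop :=
  ∃ (u w y : List T) (a c : ℕ),
    z = u ++ w ++ y ∧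
    DerivesIn g a [Symbol.nonterminal A]
      (u.map Symbol.terminal ++ [Symbol.nonterminal B] ++ y.map Symbol.terminal) ∧
    DerivesIn g c [Symbol.nonterminal B] (w.map Symbol.terminal) ∧
    1 ≤ a ∧ a + c ≤ n

lemma main_extraction (n : ℕ) (A : g.NT) (z : List T) (S : Finset g.NT)
    (hAS : A ∉ S) (hS : S ⊆ NTS g)
    (h : DerivesIn g n [Symbol.nonterminal A] (z.map Symbol.terminal)) :
    z.length ≤ mB g ^ ((NTS g).card + 1 - S.card) ∨ Pump g A z n ∨
      ∃ B ∈ S, Hits g B A z n := by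
  classical
  induction n using Nat.strong_induction_on generalizing A z S with
  | _ n IH =>
  obtain ⟨m, r, rfl, hr, hrA, hout⟩ := derivesIn_nonterminal h
  have hANTS : A ∈ NTS g := by
    simp only [NTS, Finset.mem_image]
    exact ⟨r, hr, hrA⟩
  have hScard : S.card ≤ (NTS g).card := Finset.card_le_card hS
  have hpow1 : 1 ≤ mB g ^ ((NTS g).card - S.card) :=
    Nat.one_le_pow _ _ (lt_of_lt_of_le Nat.one_pos one_le_mB)
  -- inner induction over the list of symbols
  have inner : ∀ (L : List (Symbol T g.NT)) (n' : ℕ) (z' : List T), n' ≤ m →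
      DerivesIn g n' L (z'.map Symbol.terminal) →
      z'.length ≤ L.length * mB g ^ ((NTS g).card - S.card) ∨
      ∃ (B : g.NT) (u y zB : List T) (nB a₀ : ℕ),
        z' = u ++ zB ++ y ∧
        DerivesIn g a₀ L
          (u.map Symbol.terminal ++ [Symbol.nonterminal B] ++ y.map Symbol.terminal) ∧
        DerivesIn g nB [Symbol.nonterminal B] (zB.map Symbol.terminal) ∧
        a₀ + nB ≤ n' ∧
        (B ∈ insert A S ∨ Pump g B zB nB ∨ ∃ B' ∈ insert A S, Hits g B' B zB nB) := by
    intro L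
    induction L with
    | nil =>
      intro n' z' _ h'
      left
      have hz' : z'.map (Symbol.terminal : T → Symbol T g.NT)
          = List.map Symbol.terminal ([] : List T) :=
        derivesIn_terminal (by simpa using h')
      simp at hz'
      simp [hz']
    | cons s L' ihL =>
      intro n' z' hn' h'
      rw [show s :: L' = [s] ++ L' from rfl] at h'
      obtain ⟨n₁, n₂, w₁, w₂, hn, hw, h₁, h₂⟩ := derivesIn_append h'
      obtain ⟨z₁, z₂, rfl, rfl, rfl⟩ := List.map_eq_append_iff.mp hw
      cases s with
      | terminal t =>
        have h5 : z₁.map (Symbol.terminal : T → Symbol T g.NT)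
            = List.map Symbol.terminal [t] :=
          derivesIn_terminal (by simpa using h₁)
        have hz₁ : z₁ = [t] :=
          List.map_injective_iff.mpr (fun a b hab => by injection hab) h5
        subst hz₁
        rcases ihL n₂ z₂ (le_trans (by omega) hn') h₂ with hsmall | hgood
        · left
          have : (1 : ℕ) ≤ mB g ^ ((NTS g).card - S.card) := hpow1
          simp only [List.length_append, List.length_cons, List.length_nil]
          calc 1 + z₂.length ≤ 1 * mB g ^ ((NTS g).card - S.card)
                + L'.length * mB g ^ ((NTS g).card - S.card) := by omega
            _ = (L'.length + 1) * mB g ^ ((NTS g).card - S.card) := by ring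
            _ = (Symbol.terminal t :: L').length * mB g ^ ((NTS g).card - S.card) := by
                simp [Nat.add_comm]
        · obtain ⟨B, u, y, zB, nB, a₀, hdec, hctx, hzB, hsum, hpay⟩ := hgood
          right
          refine ⟨B, t :: u, y, zB, nB, a₀, by simp [hdec], ?_, hzB, by omega, hpay⟩
          have := hctx.append_left [Symbol.terminal t]
          simpa using this
      | nonterminal B₀ =>
        by_cases hB₀ : B₀ ∈ insert A S
        · right
          refine ⟨B₀, [], z₂, z₁, n₁, n₂, by simp, ?_, h₁, by omega, Or.inl hB₀⟩
          have := h₂.append_left [Symbol.nonterminal B₀]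
          simpa using this
        · have hB₀n : n₁ < m + 1 := by omega
          have hrec := IH n₁ hB₀n B₀ z₁ (insert A S) hB₀
            (Finset.insert_subset hANTS hS) h₁
          have hcard : (insert A S).card = S.card + 1 := Finset.card_insert_of_notMem hAS
          rcases hrec with hsmall₁ | hPump | hHits
          · -- the head piece is small; continue with the tail
            rw [hcard] at hsmall₁
            have hsmall₁' : z₁.length ≤ mB g ^ ((NTS g).card - S.card) := by
              have : (NTS g).card + 1 - (S.card + 1) = (NTS g).card - S.card := by omega
              rwa [this] at hsmall₁
            rcases ihL n₂ z₂ (le_trans (by omega) hn') h₂ with hsmall₂ | hgood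
            · left
              simp only [List.length_append, List.length_cons]
              calc z₁.length + z₂.length
                  ≤ mB g ^ ((NTS g).card - S.card)
                    + L'.length * mB g ^ ((NTS g).card - S.card) := by omega
                _ = (L'.length + 1) * mB g ^ ((NTS g).card - S.card) := by ring
                _ = (Symbol.nonterminal B₀ :: L').length
                    * mB g ^ ((NTS g).card - S.card) := by simp [Nat.add_comm]
            · obtain ⟨B, u, y, zB, nB, a₀, hdec, hctx, hzB, hsum, hpay⟩ := hgood
              right
              refine ⟨B, z₁ ++ u, y, zB, nB, n₁ + a₀, by simp [hdec], ?_, hzB, by omega, hpay⟩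
              have step1 : DerivesIn g n₁ (Symbol.nonterminal B₀ :: L')
                  (z₁.map Symbol.terminal ++ L') := by
                have := h₁.append_right L'
                simpa using this
              have step2 := hctx.append_left (z₁.map Symbol.terminal)
              have := step1.trans step2
              simpa [List.append_assoc] using this
          · right
            refine ⟨B₀, [], z₂, z₁, n₁, n₂, by simp, ?_, h₁, by omega, Or.inr (Or.inl hPump)⟩
            have := h₂.append_left [Symbol.nonterminal B₀]
            simpa using this
          · obtain ⟨B', hB', hH⟩ := hHits
            right
            refine ⟨B₀, [], z₂, z₁, n₁, n₂, by simp, ?_, h₁, by omega,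
              Or.inr (Or.inr ⟨B', hB', hH⟩)⟩
            have := h₂.append_left [Symbol.nonterminal B₀]
            simpa using this
  -- apply the inner lemma to the rule's output
  rcases inner r.output m z le_rfl hout with hsmall | hgood
  · left
    calc z.length ≤ r.output.length * mB g ^ ((NTS g).card - S.card) := hsmall
      _ ≤ mB g * mB g ^ ((NTS g).card - S.card) :=
          Nat.mul_le_mul_right _ (output_le_mB hr)
      _ = mB g ^ ((NTS g).card - S.card + 1) := by rw [pow_succ, Nat.mul_comm]
      _ = mB g ^ ((NTS g).card + 1 - S.card) := by congr 1; omega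
  · obtain ⟨B, u, y, zB, nB, a₀, hdec, hctx, hzB, hsum, hpay⟩ := hgood
    -- the full context derivation  A ⇒(1+a₀) u B y
    have hstep : DerivesIn g 1 [Symbol.nonterminal A] r.output := by
      refine ⟨r.output, ⟨r, hr, ?_⟩, rfl⟩
      rw [← hrA]
      simpa using ContextFreeRule.Rewrites.input_output (r := r)
    have hctxA : DerivesIn g (1 + a₀) [Symbol.nonterminal A]
        (u.map Symbol.terminal ++ [Symbol.nonterminal B] ++ y.map Symbol.terminal) :=
      hstep.trans hctx
    rcases hpay with hB | hPump | hHits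
    · rcases Finset.mem_insert.mp hB with rfl | hBS
      · -- direct pump at A
        right; left
        exact ⟨B, [], u, zB, y, [], 0, 1 + a₀, nB, by simp [hdec], by simp [DerivesIn],
          by simpa using hctxA, hzB, by omega, by omega⟩
      · right; right
        exact ⟨B, hBS, u, zB, y, 1 + a₀, nB, hdec, hctxA, hzB, by omega, by omega⟩
    · obtain ⟨B'', u', v, w, x, y', a, b, c, hdec', d1, d2, d3, hb, hsum'⟩ := hPump
      right; left
      refine ⟨B'', u ++ u', v, w, x, y' ++ y, (1 + a₀) + a, b, c, ?_, ?_, d2, d3, hb, by omega⟩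
      · rw [hdec, hdec']; simp [List.append_assoc]
      · have := d1.surround (u.map Symbol.terminal) (y.map Symbol.terminal)
        have hcomp := hctxA.trans this
        simpa [List.append_assoc] using hcomp
    · obtain ⟨B', hB', u', w, y', a, c, hdec', d1, d3, ha, hsum'⟩ := hHits
      have hcomp : DerivesIn g ((1 + a₀) + a) [Symbol.nonterminal A]
          ((u ++ u').map Symbol.terminal ++ [Symbol.nonterminal B']
            ++ (y' ++ y).map Symbol.terminal) := by
        have := d1.surround (u.map Symbol.terminal) (y.map Symbol.terminal)
        have hcomp := hctxA.trans this
        simpa [List.append_assoc] using hcomp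
      rcases Finset.mem_insert.mp hB' with rfl | hBS
      · right; left
        refine ⟨B', [], u ++ u', w, y' ++ y, [], 0, (1 + a₀) + a, c, ?_,
          by simp [DerivesIn], hcomp, d3, by omega, by omega⟩
        rw [hdec, hdec']; simp [List.append_assoc]
      · right; right
        refine ⟨B', hBS, u ++ u', w, y' ++ y, (1 + a₀) + a, c, ?_, hcomp, d3, by omega, by omega⟩
        rw [hdec, hdec']; simp [List.append_assoc]


lemma derives_congr {s t s' t' : List (Symbol T g.NT)} (hs : s = s') (ht : t = t')
    (h : g.Derives s t) : g.Derives s' t' := hs ▸ ht ▸ h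


/-- Weak pumping: any sufficiently long word of a context-free language can be
split as `u v w x y` with `v x` nonempty such that `u v² w x² y` is again in it. -/
theorem weak_pumping (z : List T) (hz : z ∈ g.language)
    (hlen : mB g ^ ((NTS g).card + 1) < z.length) :
    ∃ u v w x y, z = u ++ v ++ w ++ x ++ y ∧ v ++ x ≠ [] ∧
      u ++ v ++ v ++ w ++ x ++ x ++ y ∈ g.language := by
  classical
  rw [mem_language_iff] at hz
  have hex : ∃ n, DerivesIn g n [Symbol.nonterminal g.initial] (z.map Symbol.terminal) :=
    derives_derivesIn hz
  set n₀ := Nat.find hex with hn₀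
  have h₀ := Nat.find_spec hex
  rcases main_extraction n₀ g.initial z ∅ (by simp) (by simp) h₀ with hsmall | hPump | hHits
  · exfalso; simp at hsmall; omega
  · obtain ⟨B, u, v, w, x, y, a, b, c, hdec, d1, d2, d3, hb, hsum⟩ := hPump
    by_cases hvx : v ++ x = ([] : List T)
    · exfalso
      obtain ⟨hv, hx⟩ := List.append_eq_nil_iff.mp hvx
      subst hv; subst hx
      have d3' := d3.surround (u.map Symbol.terminal) (y.map Symbol.terminal)
      have comp := d1.trans d3'
      have hzz : z = u ++ w ++ y := by simpa using hdec
      have comp' : DerivesIn g (a + c) [Symbol.nonterminal g.initial]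
          (z.map Symbol.terminal) := by
        rw [hzz]
        simpa [List.append_assoc] using comp
      have := Nat.find_min hex (m := a + c) (by omega)
      exact this comp'
    · refine ⟨u, v, w, x, y, hdec, hvx, ?_⟩
      rw [mem_language_iff]
      have e1 : g.Derives [Symbol.nonterminal g.initial]
          (u.map Symbol.terminal ++ [Symbol.nonterminal B] ++ y.map Symbol.terminal) :=
        derivesIn_derives d1
      have e2 := derivesIn_derives d2
      have e3 := derivesIn_derives d3
      have e2' : g.Derives
          (u.map Symbol.terminal ++ [Symbol.nonterminal B] ++ y.map Symbol.terminal)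
          (u.map Symbol.terminal ++ v.map Symbol.terminal ++ [Symbol.nonterminal B]
            ++ x.map Symbol.terminal ++ y.map Symbol.terminal) := by
        exact derives_congr (by simp) (by simp)
          ((e2.append_left (u.map Symbol.terminal)).append_right (y.map Symbol.terminal))
      have e2'' : g.Derives
          (u.map Symbol.terminal ++ v.map Symbol.terminal ++ [Symbol.nonterminal B]
            ++ x.map Symbol.terminal ++ y.map Symbol.terminal)
          (u.map Symbol.terminal ++ v.map Symbol.terminal ++ v.map Symbol.terminal
            ++ [Symbol.nonterminal B] ++ x.map Symbol.terminal ++ x.map Symbol.terminal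
            ++ y.map Symbol.terminal) := by
        exact derives_congr (by simp) (by simp)
          ((e2.append_left (u.map Symbol.terminal ++ v.map Symbol.terminal)).append_right
            (x.map Symbol.terminal ++ y.map Symbol.terminal))
      have e3' : g.Derives
          (u.map Symbol.terminal ++ v.map Symbol.terminal ++ v.map Symbol.terminal
            ++ [Symbol.nonterminal B] ++ x.map Symbol.terminal ++ x.map Symbol.terminal
            ++ y.map Symbol.terminal)
          (u.map Symbol.terminal ++ v.map Symbol.terminal ++ v.map Symbol.terminal
            ++ w.map Symbol.terminal ++ x.map Symbol.terminal ++ x.map Symbol.terminal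
            ++ y.map Symbol.terminal) := by
        exact derives_congr (by simp) (by simp)
          ((e3.append_left (u.map Symbol.terminal ++ v.map Symbol.terminal
            ++ v.map Symbol.terminal)).append_right
            (x.map Symbol.terminal ++ x.map Symbol.terminal ++ y.map Symbol.terminal))
      have := ((e1.trans e2').trans e2'').trans e3'
      simpa [List.map_append, List.append_assoc] using this
  · obtain ⟨B, hB, -⟩ := hHits
    simp at hB


end CFLPump

namespace L2Facts

/-- The group (block index) of a symbol. -/
def grp (a : ℕ) : ℕ :=
  if a = 1 ∨ a = 2 then 1 else if a = 3 ∨ a = 6 then 2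
  else if a = 15 ∨ a = 30 then 3 else if a = 5 ∨ a = 10 then 4 else 0

/-- Number of symbols of group `j`. -/
def cntg (j : ℕ) (l : List ℕ) : ℕ := l.countP (fun a => decide (grp a = j))

lemma cntg_append (j : ℕ) (l m : List ℕ) : cntg j (l ++ m) = cntg j l + cntg j m :=
  List.countP_append

lemma cntg_const {l : List ℕ} {g₀ : ℕ} (h : ∀ a ∈ l, grp a = g₀) (j : ℕ) :
    cntg j l = if g₀ = j then l.length else 0 := by
  split
  · next hj =>
    exact List.countP_eq_length.mpr (fun a ha => by simp [h a ha, hj])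
  · next hj =>
    exact List.countP_eq_zero.mpr (fun a ha => by simp [h a ha, hj])

lemma nest_length (w : List ℕ) : (nest w).length = 4 * w.length := by
  simp [nest, mulStr]; omega

lemma grp_blocks {w : List ℕ} (hw : ∀ a ∈ w, a = 1 ∨ a = 2) :
    (∀ a ∈ w, grp a = 1) ∧ (∀ a ∈ mulStr 3 w.reverse, grp a = 2) ∧
    (∀ a ∈ mulStr 15 w, grp a = 3) ∧ (∀ a ∈ mulStr 5 w.reverse, grp a = 4) := by
  refine ⟨fun a ha => ?_, fun a ha => ?_, fun a ha => ?_, fun a ha => ?_⟩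
  · rcases hw a ha with rfl | rfl <;> rfl
  · obtain ⟨b, hb, rfl⟩ := List.mem_map.mp ha
    rcases hw b (List.mem_reverse.mp hb) with rfl | rfl <;> rfl
  · obtain ⟨b, hb, rfl⟩ := List.mem_map.mp ha
    rcases hw b hb with rfl | rfl <;> rfl
  · obtain ⟨b, hb, rfl⟩ := List.mem_map.mp ha
    rcases hw b (List.mem_reverse.mp hb) with rfl | rfl <;> rfl

lemma cntg_nest {w : List ℕ} (hw : ∀ a ∈ w, a = 1 ∨ a = 2) {j : ℕ}
    (hj : j = 1 ∨ j = 2 ∨ j = 3 ∨ j = 4) : cntg j (nest w) = w.length := by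
  obtain ⟨h1, h2, h3, h4⟩ := grp_blocks hw
  have e1 := cntg_const h1 j
  have e2 := cntg_const h2 j
  have e3 := cntg_const h3 j
  have e4 := cntg_const h4 j
  have l2 : (mulStr 3 w.reverse).length = w.length := by simp [mulStr]
  have l3 : (mulStr 15 w).length = w.length := by simp [mulStr]
  have l4 : (mulStr 5 w.reverse).length = w.length := by simp [mulStr]
  rw [nest, cntg_append, cntg_append, cntg_append, e1, e2, e3, e4, l2, l3, l4]
  rcases hj with rfl | rfl | rfl | rfl <;> simp

lemma pairwise_nest {w : List ℕ} (hw : ∀ a ∈ w, a = 1 ∨ a = 2) :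
    (nest w).Pairwise (fun a b => grp a ≤ grp b) := by
  obtain ⟨h1, h2, h3, h4⟩ := grp_blocks hw
  have pc : ∀ (l : List ℕ) (g₀ : ℕ), (∀ a ∈ l, grp a = g₀) →
      l.Pairwise (fun a b => grp a ≤ grp b) := fun l g₀ h =>
    List.pairwise_of_forall_mem_list (fun a ha b hb => by rw [h a ha, h b hb])
  rw [nest]
  rw [List.pairwise_append]
  refine ⟨?_, ?_, ?_⟩
  · rw [List.pairwise_append]
    refine ⟨?_, ?_, ?_⟩
    · rw [List.pairwise_append]
      exact ⟨pc _ _ h1, pc _ _ h2, fun a ha b hb => by rw [h1 a ha, h2 b hb]; omega⟩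
    · exact pc _ _ h3
    · intro a ha b hb
      rcases List.mem_append.mp ha with ha' | ha'
      · rw [h1 a ha', h3 b hb]; omega
      · rw [h2 a ha', h3 b hb]; omega
  · exact pc _ _ h4
  · intro a ha b hb
    rw [h4 b hb]
    rcases List.mem_append.mp ha with ha' | ha'
    · rcases List.mem_append.mp ha' with ha'' | ha''
      · rw [h1 a ha'']; omega
      · rw [h2 a ha'']; omega
    · rw [h3 a ha']; omega

lemma L2_pairwise {s : List ℕ} (hs : s ∈ L2) :
    s.Pairwise (fun a b => grp a ≤ grp b) := by
  obtain ⟨w, -, hw, rfl⟩ := hs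
  exact pairwise_nest hw

/-- If `v ++ v` occurs as an infix of a word of `L2`, then `v` uses just one group. -/
lemma const_of_sq {s p q v : List ℕ} (hs : s ∈ L2) (h : s = p ++ (v ++ v) ++ q) :
    ∀ a ∈ v, grp a = grp v.headI := by
  have hvv : (v ++ v).Pairwise (fun a b => grp a ≤ grp b) :=
    (L2_pairwise hs).sublist (List.IsInfix.sublist (⟨p, q, h.symm⟩ : (v ++ v) <:+: s))
  have cross := (List.pairwise_append.mp hvv).2.2
  intro a ha
  cases v with
  | nil => simp at ha
  | cons c t =>
    have h1 := cross a ha c (by simp)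
    have h2 := cross c (by simp) a ha
    simp only [List.headI]
    omega

lemma L2_entries {s : List ℕ} (hs : s ∈ L2) : ∀ a ∈ s, a ≤ 30 := by
  obtain ⟨w, -, hw, rfl⟩ := hs
  intro a ha
  rw [nest] at ha
  have hb : ∀ c b : ℕ, b = 1 ∨ b = 2 → c ≤ 15 → c * b ≤ 30 := by
    intro c b hb hc; rcases hb with rfl | rfl <;> omega
  rcases List.mem_append.mp ha with ha' | ha'
  · rcases List.mem_append.mp ha' with ha'' | ha''
    · rcases List.mem_append.mp ha'' with h0 | h0
      · rcases hw a h0 with rfl | rfl <;> omega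
      · obtain ⟨b, hbm, rfl⟩ := List.mem_map.mp h0
        exact hb 3 b (hw b (List.mem_reverse.mp hbm)) (by omega)
    · obtain ⟨b, hbm, rfl⟩ := List.mem_map.mp ha''
      exact hb 15 b (hw b hbm) (by omega)
  · obtain ⟨b, hbm, rfl⟩ := List.mem_map.mp ha'
    exact hb 5 b (hw b (List.mem_reverse.mp hbm)) (by omega)

/-- Lists of bounded length with bounded entries form a finite set. -/
lemma finite_bounded (n : ℕ) : {l : List ℕ | l.length ≤ n ∧ ∀ a ∈ l, a ≤ 30}.Finite := by
  induction n with
  | zero =>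
    apply Set.Finite.subset (Set.finite_singleton ([] : List ℕ))
    rintro l ⟨hl, -⟩
    simp [List.length_eq_zero_iff.mp (Nat.le_zero.mp hl)]
  | succ n ih =>
    apply Set.Finite.subset
      ((Set.finite_singleton ([] : List ℕ)).union
        ((Set.finite_Iic (30 : ℕ)).image2 (fun a l => a :: l) ih))
    rintro l ⟨hl, hent⟩
    cases l with
    | nil => exact Or.inl rfl
    | cons a t =>
      refine Or.inr (Set.mem_image2_of_mem (hent a (by simp)) ?_)
      exact ⟨by simpa using hl, fun b hb => hent b (by simp [hb])⟩

/-- The two pumped pieces avoid at least one of the four groups. -/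
lemma exists_missing (gv gx : ℕ) :
    ∃ j, (j = 1 ∨ j = 2 ∨ j = 3 ∨ j = 4) ∧ j ≠ gv ∧ j ≠ gx := by
  by_cases h1 : gv = 1 ∨ gx = 1
  · by_cases h2 : gv = 2 ∨ gx = 2
    · exact ⟨3, by omega, by omega, by omega⟩
    · exact ⟨2, by omega, by omega, by omega⟩
  · exact ⟨1, by omega, by omega, by omega⟩

end L2Facts

/-- L₂ is CFL-immune. -/
theorem L2_CFLImmune : CFLImmune L2 := by
  constructor
  · -- `L2` is infinite
    apply Set.infinite_of_injective_forall_mem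
      (f := fun n : ℕ => nest (List.replicate (n + 1) 1))
    · intro a b hab
      have := congrArg List.length hab
      simp only [L2Facts.nest_length, List.length_replicate] at this
      omega
    · intro n
      exact ⟨List.replicate (n + 1) 1, by simp,
        fun a ha => Or.inl (List.eq_of_mem_replicate ha), rfl⟩
  · -- no infinite subset of `L2` is context-free
    intro M hML hMinf hCF
    obtain ⟨g, hg⟩ := hCF
    set K := CFLPump.mB g ^ ((CFLPump.NTS g).card + 1) with hK
    have hlong : ∃ z ∈ M, K < z.length := by
      by_contra hc
      push_neg at hc
      exact hMinf ((L2Facts.finite_bounded K).subset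
        (fun z hz => ⟨hc z hz, L2Facts.L2_entries (hML hz)⟩))
    obtain ⟨z, hzM, hzK⟩ := hlong
    have hzg : z ∈ g.language := by rw [hg]; exact hzM
    obtain ⟨u, v, w, x, y, hdec, hvx, hpump⟩ := CFLPump.weak_pumping z hzg hzK
    have hz2M : u ++ v ++ v ++ w ++ x ++ x ++ y ∈ M := by rw [← hg]; exact hpump
    have hz1L : z ∈ L2 := hML hzM
    have hz2L : (u ++ v ++ v ++ w ++ x ++ x ++ y) ∈ L2 := hML hz2M
    have hv_const : ∀ a ∈ v, L2Facts.grp a = L2Facts.grp v.headI :=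
      L2Facts.const_of_sq hz2L (p := u) (q := w ++ x ++ x ++ y)
        (by simp [List.append_assoc])
    have hx_const : ∀ a ∈ x, L2Facts.grp a = L2Facts.grp x.headI :=
      L2Facts.const_of_sq hz2L (p := u ++ v ++ v ++ w) (q := y)
        (by simp [List.append_assoc])
    obtain ⟨j, hj, hjv, hjx⟩ :=
      L2Facts.exists_missing (L2Facts.grp v.headI) (L2Facts.grp x.headI)
    obtain ⟨w₀, hw₀ne, hw₀, hzeq⟩ := hz1L
    obtain ⟨w₁, hw₁ne, hw₁, hz2eq⟩ := hz2L
    have hcv : L2Facts.cntg j v = 0 :=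
      List.countP_eq_zero.mpr (fun a ha => by simp [hv_const a ha, hjv.symm])
    have hcx : L2Facts.cntg j x = 0 :=
      List.countP_eq_zero.mpr (fun a ha => by simp [hx_const a ha, hjx.symm])
    have h1 : L2Facts.cntg j z = w₀.length := by
      rw [hzeq]; exact L2Facts.cntg_nest hw₀ hj
    have h2 : L2Facts.cntg j (u ++ v ++ v ++ w ++ x ++ x ++ y) = w₁.length := by
      rw [hz2eq]; exact L2Facts.cntg_nest hw₁ hj
    have hsplit : L2Facts.cntg j (u ++ v ++ v ++ w ++ x ++ x ++ y)
        = L2Facts.cntg j z + L2Facts.cntg j v + L2Facts.cntg j x := by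
      rw [hdec]
      simp only [L2Facts.cntg_append]
      ring
    have hl1 : z.length = 4 * w₀.length := by rw [hzeq]; exact L2Facts.nest_length w₀
    have hl2 : (u ++ v ++ v ++ w ++ x ++ x ++ y).length = 4 * w₁.length := by
      rw [hz2eq]; exact L2Facts.nest_length w₁
    have hlen2 : (u ++ v ++ v ++ w ++ x ++ x ++ y).length
        = z.length + v.length + x.length := by
      rw [hdec]; simp; omega
    have hvxlen : 1 ≤ v.length + x.length := by
      cases v with
      | cons a t =>
        have : (a :: t).length = t.length + 1 := rfl
        omega
      | nil =>
        cases x with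
        | cons a t =>
          have : (a :: t).length = t.length + 1 := rfl
          omega
        | nil => simp at hvx
    have hww : w₁.length = w₀.length := by
      rw [← h2, hsplit, h1, hcv, hcx]
      omega
    omega
end

section
/- The language L₂ = { w · (wᴿ)ₓ₃ · (w)ₓ₁₅ · (wᴿ)ₓ₅ : w a nonempty string over {1,2} } over the alphabet Σ = {1,2,3,6,5,10,15,30} does not belong to (CFL/n)_serial; that is, there is no alphabet Γ₀, no function g : ℕ → Γ₀* with |g(n)| = n for all n, and no context-free language L'' over Γ₀ ⊕ Σ such that for every string x over Σ, x ∈ L₂ if and only if g(|x|) · x ∈ L''. -/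
open List

variable {T : Type} {g : ContextFreeGrammar T}

/-- Step-counted derivations. -/
inductive DerIn (g : ContextFreeGrammar T) :
    ℕ → List (Symbol T g.NT) → List (Symbol T g.NT) → Prop
  | refl (u) : DerIn g 0 u u
  | head {u v w : List (Symbol T g.NT)} {n : ℕ} :
      g.Produces u v → DerIn g n v w → DerIn g (n + 1) u w

lemma DerIn.toDerives {n u v} (h : DerIn g n u v) : g.Derives u v := by
  induction h with
  | refl => exact ContextFreeGrammar.Derives.refl _
  | head hp _ ih => exact hp.trans_derives ih

lemma DerIn.tail {n u v w} (h : DerIn g n u v) (hp : g.Produces v w) :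
    DerIn g (n + 1) u w := by
  induction h with
  | refl => exact .head hp (.refl _)
  | head hp' _ ih => exact .head hp' (ih hp)

lemma derives_iff_derIn {u v} : g.Derives u v ↔ ∃ n, DerIn g n u v := by
  constructor
  · intro h
    induction h with
    | refl => exact ⟨0, .refl _⟩
    | tail _ hp ih => obtain ⟨n, hn⟩ := ih; exact ⟨n + 1, hn.tail hp⟩
  · rintro ⟨n, h⟩; exact h.toDerives

lemma produces_append_split {u v w : List (Symbol T g.NT)}
    (h : g.Produces (u ++ v) w) :
    (∃ u', g.Produces u u' ∧ w = u' ++ v) ∨ (∃ v', g.Produces v v' ∧ w = u ++ v') := by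
  obtain ⟨r, hr, hrw⟩ := h
  rw [ContextFreeRule.rewrites_iff] at hrw
  obtain ⟨p, q, h1, h2⟩ := hrw
  rw [List.append_assoc] at h1
  rcases List.append_eq_append_iff.mp h1 with ⟨a', ha1, ha2⟩ | ⟨c', hc1, hc2⟩
  ·
    -- h1 : u ++ v = p ++ ([nt] ++ q), case: p = u ++ a' ∧ v = a' ++ [nt] ++ q
    right
    refine ⟨a' ++ r.output ++ q, ⟨r, hr, ?_⟩, ?_⟩
    · rw [ContextFreeRule.rewrites_iff]
      exact ⟨a', q, by rw [ha2, List.append_assoc], rfl⟩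
    · rw [h2, ha1]; simp [List.append_assoc]
  · -- u = p ++ c' ∧ [nt] ++ q = c' ++ v
    rcases c' with _ | ⟨s, c''⟩
    · -- c' = [] : u = p, v = [nt] ++ q
      right
      refine ⟨r.output ++ q, ⟨r, hr, ?_⟩, ?_⟩
      · rw [ContextFreeRule.rewrites_iff]
        refine ⟨[], q, ?_, rfl⟩
        simpa using hc2.symm
      · rw [h2, hc1]; simp [List.append_assoc]
    · -- c' = s :: c'' : s = nt, q = c'' ++ v
      have hs : s = Symbol.nonterminal r.input ∧ q = c'' ++ v := by
        have := hc2
        simp only [List.cons_append, List.singleton_append, List.cons.injEq] at this ⊢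
        exact ⟨this.1.symm, this.2⟩
      left
      refine ⟨p ++ r.output ++ c'', ⟨r, hr, ?_⟩, ?_⟩
      · rw [ContextFreeRule.rewrites_iff]
        exact ⟨p, c'', by rw [hc1, hs.1]; simp, rfl⟩
      · rw [h2, hs.2]; simp [List.append_assoc]

lemma derIn_append_split {n} {u v w : List (Symbol T g.NT)}
    (h : DerIn g n (u ++ v) w) :
    ∃ n1 n2 w1 w2, n1 + n2 = n ∧ w = w1 ++ w2 ∧ DerIn g n1 u w1 ∧ DerIn g n2 v w2 := by
  generalize hs : u ++ v = s at h
  induction h generalizing u v with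
  | refl s => exact ⟨0, 0, u, v, rfl, hs.symm, .refl _, .refl _⟩
  | @head s t w n hp hd ih =>
    subst hs
    rcases produces_append_split hp with ⟨u', hu', ht⟩ | ⟨v', hv', ht⟩
    · obtain ⟨n1, n2, w1, w2, hn, hw, h1, h2⟩ := ih ht.symm
      exact ⟨n1 + 1, n2, w1, w2, by omega, hw, .head hu' h1, h2⟩
    · obtain ⟨n1, n2, w1, w2, hn, hw, h1, h2⟩ := ih ht.symm
      exact ⟨n1, n2 + 1, w1, w2, by omega, hw, h1, .head hv' h2⟩

lemma derIn_nil {n} {w : List (Symbol T g.NT)} (h : DerIn g n [] w) : w = [] := by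
  cases h with
  | refl => rfl
  | head hp _ =>
    obtain ⟨r, _, hrw⟩ := hp
    rw [ContextFreeRule.rewrites_iff] at hrw
    obtain ⟨p, q, h1, -⟩ := hrw
    simp at h1

lemma derIn_join {n} {α w : List (Symbol T g.NT)} (h : DerIn g n α w) :
    ∃ ws : List (List (Symbol T g.NT)), w = ws.flatten ∧
      List.Forall₂ (fun s y => ∃ k ≤ n, DerIn g k [s] y) α ws := by
  induction α generalizing n w with
  | nil => exact ⟨[], by simp [derIn_nil h], by simp⟩
  | cons s α ih =>
    have h' : DerIn g n ([s] ++ α) w := by simpa using h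
    obtain ⟨n1, n2, w1, w2, hn, hw, h1, h2⟩ := derIn_append_split h'
    obtain ⟨ws, hws, hf⟩ := ih h2
    refine ⟨w1 :: ws, by simp [hw, hws], ?_⟩
    constructor
    · exact ⟨n1, by omega, h1⟩
    · exact hf.imp fun {a b} ⟨k, hk, hd⟩ => ⟨k, by omega, hd⟩

lemma derIn_terminal {n t} {w : List (Symbol T g.NT)}
    (h : DerIn g n [Symbol.terminal t] w) : w = [Symbol.terminal t] := by
  cases h with
  | refl => rfl
  | head hp _ =>
    exfalso
    obtain ⟨r, _, hrw⟩ := hp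
    rw [ContextFreeRule.rewrites_iff] at hrw
    obtain ⟨p, q, h1, -⟩ := hrw
    rcases p with _ | ⟨a, p⟩ <;> simp at h1

/-- Compose derivations along Forall₂. -/
lemma derives_flatten {α : List (Symbol T g.NT)} {ws : List (List (Symbol T g.NT))}
    (h : List.Forall₂ (fun s y => g.Derives [s] y) α ws) :
    g.Derives α ws.flatten := by
  induction h with
  | nil => exact ContextFreeGrammar.Derives.refl _
  | @cons a b l1 l2 hab _ ih =>
    have h1 : g.Derives (a :: l1) (b ++ l1) := by
      simpa using hab.append_right l1
    have h2 : g.Derives (b ++ l1) (b ++ l2.flatten) := ih.append_left b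
    simpa using h1.trans h2

lemma derives_append_congr {a a' b b' : List (Symbol T g.NT)}
    (h1 : g.Derives a a') (h2 : g.Derives b b') : g.Derives (a ++ b) (a' ++ b') :=
  (h1.append_right b).trans (h2.append_left a')

open List

variable {T : Type} {g : ContextFreeGrammar T}

lemma flatten_split_at {ws : List (List (Symbol T g.NT))} {k : ℕ} (hk : k < ws.length) :
    ws.flatten = (ws.take k).flatten ++ ws[k] ++ (ws.drop (k + 1)).flatten := by
  conv_lhs => rw [← List.take_append_drop k ws]
  rw [List.drop_eq_getElem_cons hk, List.flatten_append, List.flatten_cons]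
  simp [List.append_assoc]

lemma extract (P : ℕ → ℕ → Prop) (hP1 : ∀ s l, l ≤ 1 → ¬ P s l) :
    ∀ (n : ℕ) (A : g.NT) (z : List (Symbol T g.NT)) (s : ℕ),
      DerIn g n [Symbol.nonterminal A] z → P s z.length →
      ∃ (z1 z3 : List (Symbol T g.NT)) (r : ContextFreeRule T g.NT)
        (ys : List (List (Symbol T g.NT))),
        r ∈ g.rules ∧ z = z1 ++ ys.flatten ++ z3 ∧
        g.Derives [Symbol.nonterminal A] (z1 ++ [Symbol.nonterminal r.input] ++ z3) ∧
        List.Forall₂ (fun sym y => g.Derives [sym] y) r.output ys ∧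
        P (s + z1.length) ys.flatten.length ∧
        ∀ k (hk : k < ys.length),
          ¬ P (s + z1.length + ((ys.take k).map length).sum) ys[k].length := by
  intro n
  induction n using Nat.strong_induction_on with
  | _ n ih =>
    intro A z s hd hP
    cases hd with
    | refl => exact absurd hP (hP1 _ _ (by simp))
    | @head _ β _ n' hp hd' =>
      -- unpack the first production
      obtain ⟨r0, hr0, hrw⟩ := hp
      rw [ContextFreeRule.rewrites_iff] at hrw
      obtain ⟨p, q, h1, h2⟩ := hrw
      have hpq : p = [] ∧ q = [] ∧ r0.input = A := by
        have hl := congrArg List.length h1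
        simp only [List.length_append, List.length_singleton, List.length_cons,
          List.length_nil] at hl
        rcases p with _ | ⟨a, p⟩
        · rcases q with _ | ⟨b, q⟩
          · refine ⟨rfl, rfl, ?_⟩
            simp only [List.nil_append, List.append_nil, List.cons.injEq] at h1
            injection h1.1.symm
          · exfalso; simp only [List.length_cons, List.length_nil] at hl; omega
        · exfalso; simp only [List.length_cons] at hl; omega
      obtain ⟨hp0, hq0, hinA⟩ := hpq
      subst hp0 hq0
      simp only [List.nil_append, List.append_nil] at h2
      subst h2
      -- split the rest of the derivation among the symbols of r0.output
      obtain ⟨ws, hws, hf⟩ := derIn_join hd'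
      have hf' : List.Forall₂ (fun sym y => g.Derives [sym] y) r0.output ws :=
        hf.imp fun {a b} ⟨k, _, hdk⟩ => hdk.toDerives
      have hlen : r0.output.length = ws.length := hf.length_eq
      by_cases hall : ∀ k (hk : k < ws.length),
          ¬ P (s + ((ws.take k).map length).sum) ws[k].length
      · refine ⟨[], [], r0, ws, hr0, by simpa using hws, ?_, hf', ?_, ?_⟩
        · rw [hinA]; simpa using ContextFreeGrammar.Derives.refl _
        · simpa [← hws] using hP
        · simpa using hall
      · push_neg at hall
        obtain ⟨k, hk, hPk⟩ := hall
        have hget := (List.forall₂_iff_get.mp hf).2 k (by omega) hk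
        obtain ⟨k0, hk0, hdk⟩ := hget
        simp only [List.get_eq_getElem] at hdk
        cases hsym : r0.output[k]'(by omega) with
        | terminal t =>
          rw [hsym] at hdk
          have := derIn_terminal hdk
          rw [this] at hPk
          exact absurd hPk (hP1 _ _ (by simp))
        | nonterminal C =>
          rw [hsym] at hdk
          obtain ⟨z1', z3', r, ys, hr, hzk, hctx, hff, hPmid, hchild⟩ :=
            ih k0 (by omega) C ws[k] (s + ((ws.take k).map length).sum) hdk hPk
          have hpre : ((ws.take k).flatten).length = ((ws.take k).map length).sum := by
            simp [List.length_flatten]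
          refine ⟨(ws.take k).flatten ++ z1', z3' ++ (ws.drop (k + 1)).flatten, r, ys,
            hr, ?_, ?_, hff, ?_, ?_⟩
          · rw [hws, flatten_split_at hk, hzk]; simp [List.append_assoc]
          · -- context derivation
            have step1 : g.Derives [Symbol.nonterminal A] r0.output := by
              rw [← hinA]
              exact ContextFreeGrammar.Produces.single
                ⟨r0, hr0, by simpa using ContextFreeRule.rewrites_of_exists_parts r0 [] []⟩
            have hsplit : r0.output =
                (r0.output.take k) ++ [r0.output[k]'(by omega)] ++ (r0.output.drop (k + 1)) := by
              conv_lhs => rw [← List.take_append_drop k r0.output]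
              rw [List.drop_eq_getElem_cons (by omega)]
              simp
            have d1 : g.Derives (r0.output.take k) ((ws.take k).flatten) :=
              derives_flatten (List.forall₂_take k hf')
            have d2 : g.Derives [r0.output[k]'(by omega)] (z1' ++ [Symbol.nonterminal r.input] ++ z3') := by
              rw [hsym]; exact hctx
            have d3 : g.Derives (r0.output.drop (k + 1)) ((ws.drop (k + 1)).flatten) :=
              derives_flatten (List.forall₂_drop (k + 1) hf')
            have hbig := derives_append_congr (derives_append_congr d1 d2) d3
            refine step1.trans ?_
            rw [hsplit]
            simpa [List.append_assoc] using hbig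
          · have harg : s + ((ws.take k).flatten ++ z1').length =
                s + ((ws.take k).map length).sum + z1'.length := by
              simp [List.length_append, hpre]; omega
            rw [harg]; exact hPmid
          · intro k' hk'
            have harg : s + ((ws.take k).flatten ++ z1').length + ((ys.take k').map length).sum =
                s + ((ws.take k).map length).sum + z1'.length + ((ys.take k').map length).sum := by
              simp [List.length_append, hpre]; omega
            rw [harg]; exact hchild k' hk'

section Arith

lemma pre_mono (ls : List ℕ) {i j : ℕ} (h : i ≤ j) : (ls.take i).sum ≤ (ls.take j).sum := by
  rw [show j = i + (j - i) by omega, List.take_add, List.sum_append]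
  omega

lemma geom_core (ls : List ℕ) (s bs m : ℕ) (hm : 1 ≤ m)
    (h1 : s ≤ bs) (h2 : bs + m ≤ s + ls.sum) :
    ∃ p q, p ≤ q ∧ p < ls.length ∧ q < ls.length ∧
      s + (ls.take p).sum ≤ bs ∧ bs < s + (ls.take (p + 1)).sum ∧
      s + (ls.take q).sum < bs + m ∧ bs + m ≤ s + (ls.take (q + 1)).sum := by
  classical
  have hne : ls.length ≠ 0 := by
    intro h
    rw [List.length_eq_zero_iff] at h
    subst h
    simp at h2
    omega
  have htl : ls.length - 1 + 1 = ls.length := by omega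
  have hQ : ∃ k, bs < s + (ls.take (k + 1)).sum :=
    ⟨ls.length - 1, by rw [htl, List.take_length]; omega⟩
  have hQ' : ∃ k, bs + m ≤ s + (ls.take (k + 1)).sum :=
    ⟨ls.length - 1, by rw [htl, List.take_length]; omega⟩
  refine ⟨Nat.find hQ, Nat.find hQ', ?_, ?_, ?_, ?_, Nat.find_spec hQ, ?_, Nat.find_spec hQ'⟩
  · exact Nat.find_min' hQ (by have := Nat.find_spec hQ'; omega)
  · have : Nat.find hQ ≤ ls.length - 1 :=
      Nat.find_min' hQ (by rw [htl, List.take_length]; omega)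
    omega
  · have : Nat.find hQ' ≤ ls.length - 1 :=
      Nat.find_min' hQ' (by rw [htl, List.take_length]; omega)
    omega
  · rcases Nat.eq_zero_or_pos (Nat.find hQ) with h0 | h0
    · rw [h0]; simpa using h1
    · have := Nat.find_min hQ (m := Nat.find hQ - 1) (by omega)
      rw [show Nat.find hQ - 1 + 1 = Nat.find hQ by omega] at this
      omega
  · rcases Nat.eq_zero_or_pos (Nat.find hQ') with h0 | h0
    · rw [h0]; simpa using by omega
    · have := Nat.find_min hQ' (m := Nat.find hQ' - 1) (by omega)
      rw [show Nat.find hQ' - 1 + 1 = Nat.find hQ' by omega] at this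
      omega

lemma sq_lt_two_pow : ∀ s, 5 ≤ s → s * s < 2 ^ s := by
  intro s hs
  induction s, hs using Nat.le_induction with
  | base => norm_num
  | succ n hn ih =>
    have h2 : (n + 1) * (n + 1) ≤ 2 * (n * n) := by nlinarith
    calc (n + 1) * (n + 1) ≤ 2 * (n * n) := h2
      _ < 2 * 2 ^ n := by omega
      _ = 2 ^ (n + 1) := by ring

lemma lin_lt_two_pow (A B : ℕ) : ∃ s, 5 ≤ s ∧ A ≤ s ∧ A + B * s < 2 ^ s := by
  refine ⟨A + B + 5, by omega, by omega, ?_⟩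
  have h1 : A + B * (A + B + 5) ≤ (1 + B) * (A + B + 5) := by nlinarith
  have h2 : (1 + B) * (A + B + 5) ≤ (A + B + 5) * (A + B + 5) :=
    Nat.mul_le_mul_right _ (by omega)
  have h3 := sq_lt_two_pow (A + B + 5) (by omega)
  omega

end Arith

section NestLemmas

lemma mulStr_length (c : ℕ) (u : List ℕ) : (mulStr c u).length = u.length := by
  simp [mulStr]

lemma nest_length (u : List ℕ) : (nest u).length = 4 * u.length := by
  simp [nest, mulStr_length]; ring

lemma mem_nest_Sigma8 {a : ℕ} {u : List ℕ} (hu : ∀ b ∈ u, b = 1 ∨ b = 2)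
    (ha : a ∈ nest u) : a ∈ Sigma8 := by
  simp only [nest, mulStr, List.mem_append, List.mem_map, List.mem_reverse] at ha
  simp only [Sigma8, Set.mem_insert_iff, Set.mem_singleton_iff]
  rcases ha with ((ha | ⟨b, hb, rfl⟩) | ⟨b, hb, rfl⟩) | ⟨b, hb, rfl⟩
  · rcases hu a ha with h | h <;> omega
  · rcases hu b hb with h | h <;> omega
  · rcases hu b hb with h | h <;> omega
  · rcases hu b hb with h | h <;> omega

lemma mulStr_inj {c : ℕ} (hc : c ≠ 0) {u v : List ℕ} (h : mulStr c u = mulStr c v) :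
    u = v := by
  have : Function.Injective (fun x : ℕ => c * x) := fun a b hab => by
    simpa using Nat.eq_of_mul_eq_mul_left (Nat.pos_of_ne_zero hc) hab
  exact List.map_injective_iff.mpr this h

lemma nest_decomp {m : ℕ} {u : List ℕ} (hu : u.length = m) :
    nest u = u ++ mulStr 3 u.reverse ++ mulStr 15 u ++ mulStr 5 u.reverse ∧
    (mulStr 3 u.reverse).length = m ∧ (mulStr 15 u).length = m ∧
    (mulStr 5 u.reverse).length = m :=
  ⟨rfl, by simp [mulStr_length, hu], by simp [mulStr_length, hu], by simp [mulStr_length, hu]⟩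

/-- The `j`-th length-`m` block of `nest u`. -/
lemma seg_nest {m : ℕ} {u : List ℕ} (hu : u.length = m) (j : ℕ) (hj : j < 4) :
    ((nest u).drop (j * m)).take m =
      [u, mulStr 3 u.reverse, mulStr 15 u, mulStr 5 u.reverse].get ⟨j, by simpa using hj⟩ := by
  obtain ⟨hdef, h1, h2, h3⟩ := nest_decomp hu
  have hA : nest u = u ++ (mulStr 3 u.reverse ++ (mulStr 15 u ++ mulStr 5 u.reverse)) := by
    rw [hdef]; simp [List.append_assoc]
  have hB : nest u = (u ++ mulStr 3 u.reverse) ++ (mulStr 15 u ++ mulStr 5 u.reverse) := by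
    rw [hdef]; simp [List.append_assoc]
  have hC : nest u = (u ++ mulStr 3 u.reverse ++ mulStr 15 u) ++ mulStr 5 u.reverse := hdef
  interval_cases j
  · rw [show (0 : ℕ) * m = 0 by ring, List.drop_zero, hA, List.take_left' hu]
    rfl
  · rw [show (1 : ℕ) * m = m by ring, hA, List.drop_left' hu, List.take_left' h1]
    rfl
  · rw [hB, show (2 : ℕ) * m = m + m by ring,
      List.drop_left' (by simp [hu, h1]), List.take_left' h2]
    rfl
  · rw [hC, show (3 : ℕ) * m = m + m + m by ring,
      List.drop_left' (by simp [hu, h1, h2]; omega), List.take_of_length_le (by omega)]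
    rfl

lemma seg_nest_inj {m : ℕ} {u u' : List ℕ} (hu : u.length = m) (hu' : u'.length = m)
    (j : ℕ) (hj : j < 4)
    (h : ((nest u).drop (j * m)).take m = ((nest u').drop (j * m)).take m) : u = u' := by
  rw [seg_nest hu j hj, seg_nest hu' j hj] at h
  interval_cases j <;> simp only [List.get] at h
  · exact h
  · have := mulStr_inj (by norm_num) h; exact List.reverse_injective this
  · exact mulStr_inj (by norm_num) h
  · have := mulStr_inj (by norm_num) h; exact List.reverse_injective this

end NestLemmas

section Mix

variable {α : Type*}

/-- Decompose the mixed string over a common prefix `ad`. -/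
lemma mix_decomp (ad X Y : List α) (a b : ℕ) (had : ad.length ≤ b) (hab : a ≤ b) :
    (ad ++ X).take a ++ ((ad ++ Y).drop a).take (b - a) ++ (ad ++ X).drop b
      = ad ++ (X.take (max a ad.length - ad.length)
          ++ (Y.drop (max a ad.length - ad.length)).take (b - max a ad.length)
          ++ X.drop (b - ad.length)) := by
  rcases le_or_gt ad.length a with h | h
  · have hmax : max a ad.length = a := by omega
    rw [hmax, List.take_append, List.take_of_length_le h,
      List.drop_append, List.drop_eq_nil_of_le h, List.nil_append,
      List.drop_append, List.drop_eq_nil_of_le had, List.nil_append]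
    simp [List.append_assoc]
  · have hmax : max a ad.length = ad.length := by omega
    rw [hmax, Nat.sub_self, List.take_zero, List.drop_zero, List.nil_append,
      List.take_append, show a - ad.length = 0 by omega, List.take_zero,
      List.append_nil, List.drop_append,
      show a - ad.length = 0 by omega, List.drop_zero,
      List.take_append, List.length_drop,
      List.take_of_length_le (l := ad.drop a) (by rw [List.length_drop]; omega),
      show b - a - (ad.length - a) = b - ad.length by omega,
      List.drop_append]
    rw [List.drop_eq_nil_of_le (show ad.length ≤ b by omega), List.nil_append]
    rw [← List.append_assoc, List.take_append_drop, List.append_assoc]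

lemma seg_mix_mid (X Y : List α) (A B c mm : ℕ)
    (hYX : Y.length = X.length) (hA : A ≤ c) (hB : c + mm ≤ B) (hBl : B ≤ X.length) :
    ((X.take A ++ (Y.drop A).take (B - A) ++ X.drop B).drop c).take mm
      = (Y.drop c).take mm := by
  have hAX : A ≤ X.length := by omega
  rw [List.append_assoc, List.drop_append, List.drop_take,
    show A - c = 0 by omega, List.take_zero, List.nil_append, List.length_take,
    show c - min A X.length = c - A by omega,
    List.drop_append, List.drop_take, List.drop_drop,
    show A + (c - A) = c by omega, List.length_take, List.length_drop,
    show c - A - min (B - A) (Y.length - A) = 0 by omega, List.drop_zero,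
    List.take_append, List.take_take, List.length_take, List.length_drop,
    show min mm (B - A - (c - A)) = mm by omega,
    show mm - min (B - A - (c - A)) (Y.length - c) = 0 by omega, List.take_zero,
    List.append_nil]

lemma seg_mix_left (X Y : List α) (A B c mm : ℕ)
    (hYX : Y.length = X.length) (hc : c + mm ≤ A) (hAB : A ≤ B) (hBl : B ≤ X.length) :
    ((X.take A ++ (Y.drop A).take (B - A) ++ X.drop B).drop c).take mm
      = (X.drop c).take mm := by
  rw [List.append_assoc, List.drop_append, List.drop_take,
    List.take_append, List.length_take, List.length_drop,
    show mm - min (A - c) (X.length - c) = 0 by omega, List.take_zero, List.append_nil,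
    List.take_take, show min mm (A - c) = mm by omega]

lemma seg_mix_right (X Y : List α) (A B c mm : ℕ)
    (hYX : Y.length = X.length) (hc : B ≤ c) (hAB : A ≤ B) (hBl : B ≤ X.length) :
    ((X.take A ++ (Y.drop A).take (B - A) ++ X.drop B).drop c).take mm
      = (X.drop c).take mm := by
  have hW : (X.take A ++ (Y.drop A).take (B - A)).length = B := by
    simp [List.length_take, List.length_drop]; omega
  rw [List.drop_append, List.drop_eq_nil_of_le (by omega), List.nil_append,
    hW, List.drop_drop, show B + (c - B) = c by omega]

end Mix

section Wof

def wof (m : ℕ) (b : Fin m → Bool) : List ℕ := List.ofFn (fun i => if b i then 2 else 1)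

lemma wof_length {m : ℕ} (b : Fin m → Bool) : (wof m b).length = m := by simp [wof]

lemma wof_mem {m : ℕ} (b : Fin m → Bool) : ∀ a ∈ wof m b, a = 1 ∨ a = 2 := by
  intro a ha
  simp only [wof, List.mem_ofFn, Set.mem_range] at ha
  obtain ⟨i, hi⟩ := ha
  split at hi <;> omega

lemma wof_inj {m : ℕ} {b b' : Fin m → Bool} (h : wof m b = wof m b') : b = b' := by
  rw [wof, wof, List.ofFn_inj] at h
  funext i
  have := congrFun h i
  by_cases hb : b i <;> by_cases hb' : b' i <;> simp_all

end Wof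

section Swap

variable {β : Type*}

lemma pre_le_sum (ls : List ℕ) (k : ℕ) : (ls.take k).sum ≤ ls.sum := by
  conv_rhs => rw [← List.take_append_drop k ls]
  rw [List.sum_append]
  omega

lemma take_flatten_ctx (z1 z3 : List β) (xs : List (List β)) (k : ℕ) :
    (z1 ++ xs.flatten ++ z3).take (z1.length + ((xs.map List.length).take k).sum)
      = z1 ++ (xs.take k).flatten := by
  have h1 : ((xs.map List.length).take k).sum ≤ xs.flatten.length := by
    rw [List.length_flatten]; exact pre_le_sum _ _
  rw [List.append_assoc, List.take_append,
    List.take_of_length_le (by omega),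
    show z1.length + ((xs.map List.length).take k).sum - z1.length
      = ((xs.map List.length).take k).sum by omega,
    List.take_append, List.take_sum_flatten,
    show ((xs.map List.length).take k).sum - xs.flatten.length = 0 by omega,
    List.take_zero, List.append_nil]

lemma drop_flatten_ctx (z1 z3 : List β) (xs : List (List β)) (k : ℕ) :
    (z1 ++ xs.flatten ++ z3).drop (z1.length + ((xs.map List.length).take k).sum)
      = (xs.drop k).flatten ++ z3 := by
  have h1 : ((xs.map List.length).take k).sum ≤ xs.flatten.length := by
    rw [List.length_flatten]; exact pre_le_sum _ _
  rw [List.append_assoc, List.drop_append,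
    List.drop_eq_nil_of_le (by omega), List.nil_append,
    show z1.length + ((xs.map List.length).take k).sum - z1.length
      = ((xs.map List.length).take k).sum by omega,
    List.drop_append, List.drop_sum_flatten,
    show ((xs.map List.length).take k).sum - xs.flatten.length = 0 by omega,
    List.drop_zero]

variable {Γ₀ : Type} {G : ContextFreeGrammar (Γ₀ ⊕ ℕ)}

lemma swap_derives
    {r : ContextFreeRule (Γ₀ ⊕ ℕ) G.NT} (hr : r ∈ G.rules)
    {ux uy : List (Γ₀ ⊕ ℕ)}
    {z1x z3x z1y z3y : List (Symbol (Γ₀ ⊕ ℕ) G.NT)}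
    {xs ys : List (List (Symbol (Γ₀ ⊕ ℕ) G.NT))}
    (hx : ux.map Symbol.terminal = z1x ++ xs.flatten ++ z3x)
    (hy : uy.map Symbol.terminal = z1y ++ ys.flatten ++ z3y)
    (hcx : G.Derives [Symbol.nonterminal G.initial]
      (z1x ++ [Symbol.nonterminal r.input] ++ z3x))
    (hfx : List.Forall₂ (fun s y => G.Derives [s] y) r.output xs)
    (hfy : List.Forall₂ (fun s y => G.Derives [s] y) r.output ys)
    (hiz : z1x.length = z1y.length)
    (hls : xs.map List.length = ys.map List.length)
    (p q : ℕ) (hpq : p ≤ q) (hq : q < xs.length)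
    (a b : ℕ)
    (ha : a = z1x.length + ((xs.map List.length).take p).sum)
    (hb : b = z1x.length + ((xs.map List.length).take (q + 1)).sum) :
    G.Derives [Symbol.nonterminal G.initial]
      ((ux.take a ++ (uy.drop a).take (b - a) ++ ux.drop b).map Symbol.terminal) := by
  set t := q + 1 - p with ht
  set ms := xs.take p ++ (ys.drop p).take t ++ xs.drop (q + 1) with hms
  -- the sum identity for the middle
  have hsum : ((ys.map List.length).take (q + 1)).sum
      = ((ys.map List.length).take p).sum + (((ys.map List.length).drop p).take t).sum := by
    rw [show q + 1 = p + t by omega, List.take_add, List.sum_append]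
  have hmidlen : (((ys.map List.length).drop p).take t).sum ≤ ((ys.drop p).flatten).length := by
    rw [List.length_flatten, ← List.map_drop]
    exact pre_le_sum _ _
  -- E1, E2, E3, E4
  have E1 : (ux.map Symbol.terminal).take a = z1x ++ (xs.take p).flatten := by
    rw [hx, ha, take_flatten_ctx]
  have E2 : (uy.map Symbol.terminal).drop a = (ys.drop p).flatten ++ z3y := by
    rw [hy, ha, hls, hiz, drop_flatten_ctx]
  have E3 : ((uy.map Symbol.terminal).drop a).take (b - a)
      = ((ys.drop p).take t).flatten := by
    rw [E2, hb, ha, hls,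
      show z1x.length + ((ys.map List.length).take (q + 1)).sum
        - (z1x.length + ((ys.map List.length).take p).sum)
        = (((ys.map List.length).drop p).take t).sum by omega,
      List.take_append,
      show (((ys.map List.length).drop p).take t).sum - ((ys.drop p).flatten).length = 0 by
        omega,
      List.take_zero, List.append_nil, ← List.map_drop, List.take_sum_flatten]
  have E4 : (ux.map Symbol.terminal).drop b = (xs.drop (q + 1)).flatten ++ z3x := by
    rw [hx, hb, drop_flatten_ctx]
  -- the mixed string equals z1x ++ ms.flatten ++ z3x
  have hfinal : (ux.take a ++ (uy.drop a).take (b - a) ++ ux.drop b).map Symbol.terminal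
      = z1x ++ ms.flatten ++ z3x := by
    rw [List.map_append, List.map_append, List.map_take, List.map_take, List.map_drop,
      List.map_drop, E1, E3, E4, hms, List.flatten_append, List.flatten_append]
    simp [List.append_assoc]
  -- Forall₂ for the mixed children
  have hro : r.output = r.output.take p ++ ((r.output.drop p).take t ++ r.output.drop (q + 1)) := by
    conv_lhs => rw [← List.take_append_drop p r.output]
    congr 1
    conv_lhs => rw [← List.take_append_drop t (r.output.drop p)]
    rw [List.drop_drop, show p + t = q + 1 by omega]
  have hmsf : List.Forall₂ (fun s y => G.Derives [s] y) r.output ms := by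
    rw [hms, hro, List.append_assoc]
    exact List.rel_append (List.forall₂_take p hfx)
      (List.rel_append (List.forall₂_take t (List.forall₂_drop p hfy))
        (List.forall₂_drop (q + 1) hfx))
  have dmid : G.Derives r.output ms.flatten := derives_flatten hmsf
  have step0 : G.Produces (z1x ++ [Symbol.nonterminal r.input] ++ z3x)
      (z1x ++ r.output ++ z3x) :=
    ⟨r, hr, ContextFreeRule.rewrites_of_exists_parts r z1x z3x⟩
  have dtail : G.Derives (z1x ++ r.output ++ z3x) (z1x ++ ms.flatten ++ z3x) :=
    derives_append_congr
      (derives_append_congr (ContextFreeGrammar.Derives.refl z1x) dmid)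
      (ContextFreeGrammar.Derives.refl z3x)
  rw [hfinal]
  exact (hcx.trans_produces step0).trans dtail

end Swap

section Sig

/-- Signature type for the pigeonhole argument. -/
def SigT (R C N : ℕ) : Type :=
  Fin R × Fin N × (Fin C → Fin N) × Fin N × Fin N × Fin 4 × Fin 4

instance (R C N : ℕ) : Fintype (SigT R C N) := by unfold SigT; infer_instance

lemma card_SigT (R C N : ℕ) :
    Fintype.card (SigT R C N) = R * (N * (N ^ C * (N * (N * (4 * 4))))) := by
  simp [SigT, Fintype.card_fun]

/-- What a signature records about a string `x`. -/
def SigSpec {Γ₀ : Type} (G : ContextFreeGrammar.{0} (Γ₀ ⊕ ℕ)) (m C : ℕ)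
    (x : List (Γ₀ ⊕ ℕ)) (σ : SigT G.rules.toList.length C (8 * m + 2)) : Prop :=
  ∃ (z1 z3 : List (Symbol (Γ₀ ⊕ ℕ) G.NT)) (ysl : List (List (Symbol (Γ₀ ⊕ ℕ) G.NT))),
    x.map Symbol.terminal = z1 ++ ysl.flatten ++ z3 ∧
    G.Derives [Symbol.nonterminal G.initial]
      (z1 ++ [Symbol.nonterminal (G.rules.toList.get σ.1).input] ++ z3) ∧
    List.Forall₂ (fun s y => G.Derives [s] y) (G.rules.toList.get σ.1).output ysl ∧
    z1.length = (σ.2.1 : ℕ) ∧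
    (∀ k : Fin C, (σ.2.2.1 k : ℕ) = (ysl.map List.length).getD k 0) ∧
    (σ.2.2.2.1 : ℕ) ≤ (σ.2.2.2.2.1 : ℕ) ∧
    (σ.2.2.2.2.1 : ℕ) < ysl.length ∧
    z1.length + ((ysl.map List.length).take (σ.2.2.2.1 : ℕ)).sum
      ≤ 4 * m + (σ.2.2.2.2.2.1 : ℕ) * m ∧
    4 * m + (σ.2.2.2.2.2.1 : ℕ) * m + m
      ≤ z1.length + ((ysl.map List.length).take ((σ.2.2.2.2.1 : ℕ) + 1)).sum ∧
    (4 * m + (σ.2.2.2.2.2.2 : ℕ) * m + m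
        ≤ z1.length + ((ysl.map List.length).take (σ.2.2.2.1 : ℕ)).sum ∨
      z1.length + ((ysl.map List.length).take ((σ.2.2.2.2.1 : ℕ) + 1)).sum
        ≤ 4 * m + (σ.2.2.2.2.2.2 : ℕ) * m)

lemma sigspec_exists {Γ₀ : Type} (G : ContextFreeGrammar.{0} (Γ₀ ⊕ ℕ)) (m C : ℕ)
    (hm : 2 ≤ m) (hCm : C + 1 ≤ m)
    (houtC : ∀ r ∈ G.rules, r.output.length ≤ C)
    (x : List (Γ₀ ⊕ ℕ)) (hx : x.length = 8 * m)
    (hder : G.Derives [Symbol.nonterminal G.initial] (x.map Symbol.terminal)) :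
    ∃ σ, SigSpec G m C x σ := by
  obtain ⟨n, hn⟩ := derives_iff_derIn.mp hder
  have hP1 : ∀ s l, l ≤ 1 →
      ¬ (∃ j, j < 4 ∧ s ≤ 4 * m + j * m ∧ 4 * m + j * m + m ≤ s + l) := by
    rintro s l hl ⟨j, hj, h1, h2⟩; omega
  have hProot : ∃ j, j < 4 ∧ (0 : ℕ) ≤ 4 * m + j * m ∧ 4 * m + j * m + m ≤
      0 + (List.map (@Symbol.terminal (Γ₀ ⊕ ℕ) G.NT) x).length := by
    refine ⟨0, by norm_num, by omega, ?_⟩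
    rw [List.length_map, hx]; omega
  obtain ⟨z1, z3, r, ys, hr, hz, hctx, hff, hPmid, hchild⟩ :=
    extract (fun s l => ∃ j, j < 4 ∧ s ≤ 4 * m + j * m ∧ 4 * m + j * m + m ≤ s + l)
      hP1 n G.initial _ 0 hn hProot
  obtain ⟨j, hj4, hj1, hj2⟩ := hPmid
  set ls := ys.map List.length with hls
  have hlslen : ls.length = ys.length := List.length_map _
  have hflat : ys.flatten.length = ls.sum := List.length_flatten
  have hchild' : ∀ k, k < ls.length →
      ¬ (∃ jj, jj < 4 ∧ z1.length + (ls.take k).sum ≤ 4 * m + jj * m ∧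
        4 * m + jj * m + m ≤ z1.length + (ls.take k).sum + ls[k]!) := by
    intro k hk hcon
    obtain ⟨jj, hjj, hc1, hc2⟩ := hcon
    have hk' : k < ys.length := by omega
    apply hchild k hk'
    have e1 : (ys.take k).map List.length = ls.take k := (List.map_take)
    have e2 : ls[k]! = ys[k].length := by
      rw [getElem!_pos ls k (by omega)]
      simp [hls]
    refine ⟨jj, hjj, ?_, ?_⟩
    · rw [e1]; omega
    · rw [e1]; omega
  obtain ⟨p, q, hpq, hplen, hqlen, gA, gB, gC, gD⟩ :=
    geom_core ls z1.length (4 * m + j * m) m (by omega) (by omega) (by omega)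
  -- the untouched block
  have huntouched : ∃ j', j' < 4 ∧
      (4 * m + j' * m + m ≤ z1.length + (ls.take p).sum ∨
       z1.length + (ls.take (q + 1)).sum ≤ 4 * m + j' * m) := by
    have epre : (ls.take (q + 1)).sum = (ls.take q).sum + ls[q] := List.sum_take_succ _ _ hqlen
    have epre' : (ls.take (p + 1)).sum = (ls.take p).sum + ls[p] := List.sum_take_succ _ _ hplen
    rcases le_or_gt j 1 with hj1' | hj2'
    · refine ⟨j + 2, by omega, Or.inr ?_⟩
      by_contra hcon
      push_neg at hcon
      apply hchild' q (by omega)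
      have e1 : (j + 1) * m = j * m + m := by ring
      have e2 : (j + 2) * m = j * m + 2 * m := by ring
      refine ⟨j + 1, by omega, by omega, ?_⟩
      rw [getElem!_pos ls q (by omega)]
      omega
    · refine ⟨j - 2, by omega, Or.inl ?_⟩
      by_contra hcon
      push_neg at hcon
      apply hchild' p (by omega)
      have e2 : (j - 1) * m = (j - 2) * m + m := by
        have h : j - 1 = (j - 2) + 1 := by omega
        rw [h]; ring
      have e3 : j * m = (j - 2) * m + 2 * m := by
        have h : j = (j - 2) + 2 := by omega
        conv_lhs => rw [h]
        ring
      refine ⟨j - 1, by omega, by omega, ?_⟩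
      rw [getElem!_pos ls p (by omega)]
      omega
  obtain ⟨j', hj'4, hunt⟩ := huntouched
  -- bounds
  have hlens := congrArg List.length hz
  rw [List.length_map, hx, List.length_append, List.length_append, hflat] at hlens
  have hyslen : ys.length = r.output.length := hff.length_eq.symm
  have hout : r.output.length ≤ C := houtC r hr
  have hgetD : ∀ k : ℕ, ls.getD k 0 < 8 * m + 2 := by
    intro k
    rcases lt_or_ge k ls.length with hk | hk
    · rw [List.getD_eq_getElem ls 0 hk]
      have : ls[k] ≤ ls.sum :=
        List.single_le_sum (fun x _ => Nat.zero_le x) _ (ls.getElem_mem hk)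
      omega
    · rw [List.getD_eq_default ls 0 hk]; omega
  obtain ⟨ri, hri⟩ := List.mem_iff_get.mp (Finset.mem_toList.mpr hr)
  refine ⟨⟨ri, ⟨z1.length, by omega⟩, fun k => ⟨ls.getD k 0, hgetD k⟩,
    ⟨p, by omega⟩, ⟨q, by omega⟩, ⟨j, by omega⟩, ⟨j', by omega⟩⟩,
    z1, z3, ys, hz, ?_, ?_, rfl, fun k => rfl, hpq, (by omega : q < ys.length), gA, gD, hunt⟩
  · rw [hri]; exact hctx
  · rw [hri]; exact hff

end Sig

/-- L₂ does not belong to (CFL/n)_serial. -/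
theorem L2_not_in_CFL_serial_advice : ¬ InCFLAdviceSerial Sigma8 L2 := by
  rintro ⟨Γ₀, _inst, gAdv, L'', hglen, ⟨G, hG⟩, hiff⟩
  classical
  obtain ⟨C, houtC⟩ : ∃ C, ∀ r ∈ G.rules, r.output.length ≤ C :=
    ⟨(G.rules.toList.map (fun r => r.output.length)).sum, fun r hr =>
      List.single_le_sum (fun x _ => Nat.zero_le x) _
        (List.mem_map_of_mem (Finset.mem_toList.mpr hr))⟩
  set R := G.rules.toList.length with hRdef
  obtain ⟨s, hs5, hsA, hlin⟩ := lin_lt_two_pow (R + 4 * (C + 3) + C + 5) (C + 3)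
  set m := 2 ^ s with hmdef
  have hsm : s < m := Nat.lt_two_pow_self
  have hm32 : 32 ≤ m := by
    calc (32 : ℕ) = 2 ^ 5 := by norm_num
      _ ≤ 2 ^ s := Nat.pow_le_pow_right (by norm_num) hs5
  have hm2 : 2 ≤ m := by omega
  have hCm : C + 5 ≤ m := by omega
  set ad : List (Γ₀ ⊕ ℕ) := (gAdv (4 * m)).map Sum.inl with haddef
  have hadlen : ad.length = 4 * m := by rw [haddef, List.length_map, hglen]
  -- each nest string gives a derivation
  have hstr : ∀ b : Fin m → Bool,
      (ad ++ (nest (wof m b)).map Sum.inr).length = 8 * m ∧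
      G.Derives [Symbol.nonterminal G.initial]
        ((ad ++ (nest (wof m b)).map Sum.inr).map Symbol.terminal) := by
    intro b
    have hwlen : (nest (wof m b)).length = 4 * m := by
      rw [nest_length, wof_length]
    have hmem : ∀ a ∈ nest (wof m b), a ∈ Sigma8 := fun a ha =>
      mem_nest_Sigma8 (wof_mem b) ha
    have hL2 : nest (wof m b) ∈ L2 :=
      ⟨wof m b, List.length_pos_iff.mp (by rw [wof_length]; omega), wof_mem b, rfl⟩
    have hmemL := (hiff (nest (wof m b)) hmem).mp hL2
    rw [hwlen, ← hG] at hmemL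
    refine ⟨?_, ?_⟩
    · rw [List.length_append, hadlen, List.length_map, hwlen]; omega
    · exact (ContextFreeGrammar.mem_language_iff G _).mp hmemL
  have hex : ∀ b : Fin m → Bool,
      ∃ σ, SigSpec G m C (ad ++ (nest (wof m b)).map Sum.inr) σ := by
    intro b
    exact sigspec_exists G m C hm2 (by omega) houtC _ (hstr b).1 (hstr b).2
  -- pigeonhole
  have hcard : Fintype.card (SigT R C (8 * m + 2)) < Fintype.card (Fin m → Bool) := by
    rw [card_SigT, Fintype.card_fun, Fintype.card_bool, Fintype.card_fin]
    have hN : 8 * m + 2 ≤ 2 ^ (s + 4) := by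
      have h8 : (8 : ℕ) * m = 2 ^ (s + 3) := by
        rw [hmdef, pow_add]; ring
      have h2 : 2 ^ (s + 3) + 2 ^ (s + 3) = 2 ^ (s + 4) := by
        rw [pow_succ]; ring
      have h3 : (2 : ℕ) ≤ 2 ^ (s + 3) := by
        calc (2:ℕ) = 2^1 := by norm_num
          _ ≤ 2 ^ (s+3) := Nat.pow_le_pow_right (by norm_num) (by omega)
      omega
    have hR : R ≤ 2 ^ R := le_of_lt (Nat.lt_two_pow_self)
    calc R * ((8*m+2) * ((8*m+2)^C * ((8*m+2) * ((8*m+2) * (4*4)))))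
        ≤ 2^R * (2^(s+4) * ((2^(s+4))^C * (2^(s+4) * (2^(s+4) * (2^4))))) := by
          gcongr <;> norm_num
      _ = 2 ^ (R + ((s+4) + ((s+4)*C + ((s+4) + ((s+4) + 4))))) := by
          rw [← pow_mul, ← pow_add, ← pow_add, ← pow_add, ← pow_add, ← pow_add]
      _ < 2 ^ m := by
          apply Nat.pow_lt_pow_right (by norm_num)
          have hexp : (s+4)*C = s*C + 4*C := by ring
          have hlin' : (C+3)*s = C*s + 3*s := by ring
          have hcs : s * C = C * s := by ring
          omega
  obtain ⟨b, b', hbb', hfeq⟩ :=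
    Fintype.exists_ne_map_eq_of_card_lt (fun b => Classical.choose (hex b)) hcard
  have hsx := Classical.choose_spec (hex b)
  have hsy := Classical.choose_spec (hex b')
  rw [← hfeq] at hsy
  set σ := Classical.choose (hex b) with hσdef
  set X := nest (wof m b) with hXdef
  set Y := nest (wof m b') with hYdef
  have hXlen : X.length = 4 * m := by rw [hXdef, nest_length, wof_length]
  have hYlen : Y.length = 4 * m := by rw [hYdef, nest_length, wof_length]
  obtain ⟨z1x, z3x, xs, hzx, hcx, hfx, hizx, hlfx, hpqσ, hqx, gAx, gBx, gUx⟩ := hsx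
  obtain ⟨z1y, z3y, ys, hzy, hcy, hfy, hizy, hlfy, hpqy, hqy, gAy, gBy, gUy⟩ := hsy
  set r := G.rules.toList.get σ.1 with hrdef
  have hrmem : r ∈ G.rules := Finset.mem_toList.mp (List.get_mem _ _)
  set p := (σ.2.2.2.1 : ℕ) with hpdef
  set q := (σ.2.2.2.2.1 : ℕ) with hqdef
  set j := (σ.2.2.2.2.2.1 : ℕ) with hjdef
  set j' := (σ.2.2.2.2.2.2 : ℕ) with hj'def
  have hj4 : j < 4 := (σ.2.2.2.2.2.1).isLt
  have hj'4 : j' < 4 := (σ.2.2.2.2.2.2).isLt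
  have hxslen : xs.length = r.output.length := hfx.length_eq.symm
  have hyslen : ys.length = r.output.length := hfy.length_eq.symm
  have houtr : r.output.length ≤ C := houtC r hrmem
  -- equal child lengths
  have hls : xs.map List.length = ys.map List.length := by
    apply List.ext_getElem
    · rw [List.length_map, List.length_map, hxslen, hyslen]
    · intro k h1 h2
      rw [List.length_map] at h1 h2
      have hkC : k < C := by omega
      have e1 := hlfx ⟨k, hkC⟩
      have e2 := hlfy ⟨k, hkC⟩
      rw [show ((⟨k, hkC⟩ : Fin C) : ℕ) = k from rfl] at e1 e2
      rw [List.getD_eq_getElem _ 0 (by rw [List.length_map]; omega)] at e1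
      rw [List.getD_eq_getElem _ 0 (by rw [List.length_map]; omega)] at e2
      rw [← e1, ← e2]
  have hiz : z1x.length = z1y.length := by rw [hizx, hizy]
  -- the window
  set a := z1x.length + ((xs.map List.length).take p).sum with hadef
  set b2 := z1x.length + ((xs.map List.length).take (q + 1)).sum with hb2def
  have hq_xs : q < xs.length := hqx
  have hab : a ≤ b2 := by
    have := pre_mono (xs.map List.length) (show p ≤ q + 1 by omega)
    omega
  have hlenacc := congrArg List.length hzx
  rw [List.length_map, (hstr b).1, List.length_append, List.length_append,
    List.length_flatten] at hlenacc
  have hb8 : b2 ≤ 8 * m := by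
    have := pre_le_sum (xs.map List.length) (q + 1)
    omega
  have hjm : j * m ≤ 3 * m := Nat.mul_le_mul_right m (by omega)
  have hj'm : j' * m ≤ 3 * m := Nat.mul_le_mul_right m (by omega)
  have h4b : 4 * m < b2 := by omega
  -- the swapped string is derivable
  have hswap := swap_derives hrmem hzx hzy hcx hfx hfy hiz hls p q hpqσ hq_xs
    a b2 hadef hb2def
  -- identify the swapped string
  set A' := max a (4 * m) - 4 * m with hA'def
  set B' := b2 - 4 * m with hB'def
  set v : List ℕ := X.take A' ++ (Y.drop A').take (B' - A') ++ X.drop B' with hvdef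
  have hmix : (ad ++ X.map Sum.inr).take a
      ++ ((ad ++ Y.map Sum.inr).drop a).take (b2 - a)
      ++ (ad ++ X.map Sum.inr).drop b2 = ad ++ v.map Sum.inr := by
    rw [mix_decomp ad (X.map Sum.inr) (Y.map Sum.inr) a b2 (by omega) hab, hadlen,
      show b2 - max a (4 * m) = B' - A' from by omega, ← hA'def, ← hB'def, hvdef]
    simp [List.map_append, List.map_take, List.map_drop]
  rw [hmix] at hswap
  have hu'mem : ad ++ v.map Sum.inr ∈ L'' := by
    rw [← hG]
    exact (ContextFreeGrammar.mem_language_iff G _).mpr hswap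
  -- v is a valid Sigma8 string of length 4m
  have hA'le : A' ≤ 3 * m := by omega
  have hvlen : v.length = 4 * m := by
    rw [hvdef]
    simp only [List.length_append, List.length_take, List.length_drop, hXlen, hYlen]
    omega
  have hvmem : ∀ c ∈ v, c ∈ Sigma8 := by
    intro c hc
    rw [hvdef] at hc
    rcases List.mem_append.mp hc with hc1 | hc2
    · rcases List.mem_append.mp hc1 with hc3 | hc4
      · exact mem_nest_Sigma8 (wof_mem b) (List.mem_of_mem_take hc3)
      · exact mem_nest_Sigma8 (wof_mem b')
          (List.mem_of_mem_drop (List.mem_of_mem_take hc4))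
    · exact mem_nest_Sigma8 (wof_mem b) (List.mem_of_mem_drop hc2)
  have hvL2 : v ∈ L2 := by
    refine (hiff v hvmem).mpr ?_
    rw [hvlen]
    exact hu'mem
  obtain ⟨u, hune, hu12, hveq⟩ := hvL2
  have hulen : u.length = m := by
    have := congrArg List.length hveq
    rw [hvlen, nest_length] at this
    omega
  -- segment analysis
  have hYX : Y.length = X.length := by omega
  have hseg1 : (v.drop (j * m)).take m = (Y.drop (j * m)).take m := by
    rw [hvdef]
    exact seg_mix_mid X Y A' B' (j * m) m hYX (by omega) (by omega) (by omega)
  have hseg2 : (v.drop (j' * m)).take m = (X.drop (j' * m)).take m := by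
    rcases gUx with hl | hr2
    · rw [hvdef]
      exact seg_mix_left X Y A' B' (j' * m) m hYX (by omega) (by omega) (by omega)
    · rw [hvdef]
      exact seg_mix_right X Y A' B' (j' * m) m hYX (by omega) (by omega) (by omega)
  have hu_eq_y : u = wof m b' := by
    apply seg_nest_inj hulen (wof_length b') j hj4
    rw [← hveq, ← hYdef]
    exact hseg1
  have hu_eq_x : u = wof m b := by
    apply seg_nest_inj hulen (wof_length b) j' hj'4
    rw [← hveq, ← hXdef]
    exact hseg2
  exact hbb' (wof_inj (hu_eq_x ▸ hu_eq_y))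
end

section
/- (REG/n)_serial is contained in REG/n: for every alphabet Σ and every language L over Σ, if L belongs to (REG/n)_serial then L belongs to REG/n. -/
lemma zip_replicate_eq_map' {α β : Type*} (xs : List α) (c : β) :
    xs.zip (List.replicate xs.length c) = xs.map fun t => (t, c) := by
  induction xs with
  | nil => rfl
  | cons t ts ih => simp [List.replicate_succ, ih]

/-- (REG/n)_serial ⊆ REG/n : for every alphabet Σ and every language L over Σ,
if L has a regular recognizer with length-respecting serial advice, then L has a
regular recognizer with length-respecting parallel advice. -/
theorem REG_serial_advice_subset_REG_parallel_advice
    (σ : Type) [Fintype σ] (L : Language σ)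
    (hserial : ∃ (Γ₀ : Type) (_ : Fintype Γ₀) (g : ℕ → List Γ₀)
        (L'' : Language (Γ₀ ⊕ σ)),
      (∀ n, (g n).length = n) ∧ L''.IsRegular ∧
        ∀ x : List σ, x ∈ L ↔ (g x.length).map Sum.inl ++ x.map Sum.inr ∈ L'') :
    ∃ (Γ : Type) (_ : Fintype Γ) (h : ℕ → List Γ) (L' : Language (σ × Γ)),
      (∀ n, (h n).length = n) ∧ L'.IsRegular ∧
        ∀ x : List σ, x ∈ L ↔ x.zip (h x.length) ∈ L' := by
  classical
  obtain ⟨Γ₀, _, g, L'', hg, ⟨Q, _, M, hM⟩, hmem⟩ := hserial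
  -- q n : state of M after reading the advice g n
  set q : ℕ → Q := fun n => M.evalFrom M.start ((g n).map Sum.inl) with hq
  -- DFA N over σ × Q
  set N : DFA (σ × Q) (Unit ⊕ Option (Q × Q)) :=
    { step := fun s p =>
        match s with
        | Sum.inl _ => Sum.inr (some (p.2, M.step p.2 (Sum.inr p.1)))
        | Sum.inr none => Sum.inr none
        | Sum.inr (some (a, cur)) =>
            if p.2 = a then Sum.inr (some (a, M.step cur (Sum.inr p.1)))
            else Sum.inr none
      start := Sum.inl ()
      accept := {s | match s with
        | Sum.inl _ => M.evalFrom M.start ((g 0).map Sum.inl) ∈ M.accept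
        | Sum.inr none => False
        | Sum.inr (some (_, cur)) => cur ∈ M.accept} } with hN
  refine ⟨Q, inferInstance, fun n => List.replicate n (q n), N.accepts,
    fun n => List.length_replicate, ⟨_, inferInstance, N, rfl⟩, ?_⟩
  have key : ∀ (xs : List σ) (a cur : Q),
      N.evalFrom (Sum.inr (some (a, cur))) (xs.map fun s => (s, a))
        = Sum.inr (some (a, M.evalFrom cur (xs.map Sum.inr))) := by
    intro xs
    induction xs with
    | nil => intro a cur; rfl
    | cons s xs ih =>
      intro a cur
      have h1 : N.evalFrom (Sum.inr (some (a, cur)))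
            (((s, a)) :: xs.map fun s => (s, a))
          = N.evalFrom (N.step (Sum.inr (some (a, cur))) (s, a))
            (xs.map fun s => (s, a)) := rfl
      have hstep : N.step (Sum.inr (some (a, cur))) (s, a)
          = Sum.inr (some (a, M.step cur (Sum.inr s))) := by
        simp [hN]
      have h2 : M.evalFrom cur (List.map Sum.inr (s :: xs))
          = M.evalFrom (M.step cur (Sum.inr s)) (xs.map Sum.inr) := rfl
      simp only [List.map_cons] at *
      rw [h1, hstep, ih, h2]
  -- membership in M.accepts reformulation
  have hmem' : ∀ x : List σ,
      x ∈ L ↔ M.evalFrom (q x.length) (x.map Sum.inr) ∈ M.accept := by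
    intro x
    rw [hmem x, ← hM, DFA.mem_accepts, DFA.eval, DFA.evalFrom_of_append]
  intro x
  rw [DFA.mem_accepts, hmem' x]
  cases x with
  | nil =>
    simp only [List.length_nil, List.map_nil, DFA.evalFrom_nil, List.zip_nil_left,
      DFA.eval_nil]
    rfl
  | cons s xs =>
    have hz : (s :: xs).zip (List.replicate (s :: xs).length (q (s :: xs).length))
        = (s, q (s :: xs).length) :: (xs.map fun t => (t, q (s :: xs).length)) := by
      simp only [List.length_cons, List.replicate_succ, List.zip_cons_cons]
      rw [zip_replicate_eq_map']
    rw [hz]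
    have h1 : N.eval ((s, q (s :: xs).length) :: xs.map fun t => (t, q (s :: xs).length))
        = N.evalFrom (N.step N.start (s, q (s :: xs).length))
            (xs.map fun t => (t, q (s :: xs).length)) := rfl
    have h2 : N.step N.start (s, q (s :: xs).length)
        = Sum.inr (some (q (s :: xs).length,
            M.step (q (s :: xs).length) (Sum.inr s))) := by
      simp [hN]
    have h3 : M.evalFrom (q (s :: xs).length) (List.map Sum.inr (s :: xs))
        = M.evalFrom (M.step (q (s :: xs).length) (Sum.inr s)) (xs.map Sum.inr) := rfl
    rw [h1, h2, key, h3]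
    rfl
end
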